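/- arXiv:1110.6724 — 3 statements merged into one kernel-verified Lean document; each statement's English description precedes it below -/
import Mathlib

section
/- Let Ω(A) = (H, ◁, ▷, τ) be an extending datum of a bialgebra A such that ▷ satisfies (BE2) (g ▷ (ab) = Σ (g₍₁₎ ▷ a₍₁₎)((g₍₂₎ ◁ a₍₂₎) ▷ b)) and (H, ◁) is a right A-module. Define ψ : H ⊗ A → A ⊗ H by ψ(h ⊗ a) = Σ (h₍₁₎ ▷ a₍₁₎) ⊗ (h₍₂₎ ◁ a₍₂₎). Then (μ_A ⊗ H) ∘ (A ⊗ ψ) ∘ (ψ ⊗ A) = ψ ∘ (H ⊗ μ_A). -/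
open TensorProduct

variable {R A V H : Type*} [CommRing R] [Ring A] [Bialgebra R A]
  [AddCommGroup V] [Module R V] [AddCommGroup H] [Module R H] [Coalgebra R H]

/-- (μ_A ⊗ V) ∘ (A ⊗ ψ) ∘ (ψ ⊗ A) : (V ⊗ A) ⊗ A → A ⊗ V -/
noncomputable def psiMulLHS (ψ : V ⊗[R] A →ₗ[R] A ⊗[R] V) :
    (V ⊗[R] A) ⊗[R] A →ₗ[R] A ⊗[R] V :=
  TensorProduct.map (LinearMap.mul' R A) LinearMap.id
    ∘ₗ (TensorProduct.assoc R A A V).symm.toLinearMap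
    ∘ₗ LinearMap.lTensor A ψ
    ∘ₗ (TensorProduct.assoc R A V A).toLinearMap
    ∘ₗ LinearMap.rTensor A ψ

/-- ψ ∘ (V ⊗ μ_A) : (V ⊗ A) ⊗ A → A ⊗ V -/
noncomputable def psiMulRHS (ψ : V ⊗[R] A →ₗ[R] A ⊗[R] V) :
    (V ⊗[R] A) ⊗[R] A →ₗ[R] A ⊗[R] V :=
  ψ ∘ₗ LinearMap.lTensor V (LinearMap.mul' R A)
    ∘ₗ (TensorProduct.assoc R V A A).toLinearMap

/-- ∇ = (μ_A ⊗ V) ∘ (A ⊗ ψ) ∘ (A ⊗ V ⊗ η_A) : A ⊗ V → A ⊗ V -/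
noncomputable def nabla (ψ : V ⊗[R] A →ₗ[R] A ⊗[R] V) :
    A ⊗[R] V →ₗ[R] A ⊗[R] V :=
  TensorProduct.map (LinearMap.mul' R A) LinearMap.id
    ∘ₗ (TensorProduct.assoc R A A V).symm.toLinearMap
    ∘ₗ LinearMap.lTensor A ψ
    ∘ₗ LinearMap.lTensor A ((TensorProduct.mk R V A).flip 1)

/-- The comultiplication of the tensor product coalgebra H ⊗ A. -/
noncomputable def comulHA : H ⊗[R] A →ₗ[R] (H ⊗[R] A) ⊗[R] (H ⊗[R] A) :=
  (TensorProduct.tensorTensorTensorComm R H H A A).toLinearMap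
    ∘ₗ TensorProduct.map (Coalgebra.comul : H →ₗ[R] H ⊗[R] H)
        (Coalgebra.comul : A →ₗ[R] A ⊗[R] A)

/-- The comultiplication of the tensor product coalgebra H ⊗ H. -/
noncomputable def comulHH : H ⊗[R] H →ₗ[R] (H ⊗[R] H) ⊗[R] (H ⊗[R] H) :=
  (TensorProduct.tensorTensorTensorComm R H H H H).toLinearMap
    ∘ₗ TensorProduct.map (Coalgebra.comul : H →ₗ[R] H ⊗[R] H)
        (Coalgebra.comul : H →ₗ[R] H ⊗[R] H)

/-- The counit of the tensor product coalgebra H ⊗ A. -/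
noncomputable def counitHA : H ⊗[R] A →ₗ[R] R :=
  (TensorProduct.lid R R).toLinearMap
    ∘ₗ TensorProduct.map (Coalgebra.counit : H →ₗ[R] R)
        (Coalgebra.counit : A →ₗ[R] R)

/-- The counit of the tensor product coalgebra H ⊗ H. -/
noncomputable def counitHH : H ⊗[R] H →ₗ[R] R :=
  (TensorProduct.lid R R).toLinearMap
    ∘ₗ TensorProduct.map (Coalgebra.counit : H →ₗ[R] R)
        (Coalgebra.counit : H →ₗ[R] R)

/-- An extending datum Ω(A) = (H, ◁, ▷, τ) of the bialgebra A
(Agore–Militaru). -/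
structure ExtendingDatum (R A H : Type*) [CommRing R] [Ring A] [Bialgebra R A]
    [AddCommGroup H] [Module R H] [Coalgebra R H] where
  /-- the distinguished element 1_H -/
  one : H
  /-- the multiplication μ_H -/
  mul : H ⊗[R] H →ₗ[R] H
  /-- the action ◁ : H ⊗ A → H -/
  ract : H ⊗[R] A →ₗ[R] H
  /-- the action ▷ : H ⊗ A → A -/
  lact : H ⊗[R] A →ₗ[R] A
  /-- the cocycle τ : H ⊗ H → A -/
  tau : H ⊗[R] H →ₗ[R] A
  comul_one : (Coalgebra.comul : H →ₗ[R] H ⊗[R] H) one = one ⊗ₜ one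
  one_mul' : ∀ h : H, mul (one ⊗ₜ h) = h
  mul_one' : ∀ h : H, mul (h ⊗ₜ one) = h
  ract_comul : TensorProduct.map ract ract ∘ₗ comulHA =
    (Coalgebra.comul : H →ₗ[R] H ⊗[R] H) ∘ₗ ract
  ract_counit : (Coalgebra.counit : H →ₗ[R] R) ∘ₗ ract = counitHA
  lact_comul : TensorProduct.map lact lact ∘ₗ comulHA =
    (Coalgebra.comul : A →ₗ[R] A ⊗[R] A) ∘ₗ lact
  lact_counit : (Coalgebra.counit : A →ₗ[R] R) ∘ₗ lact = counitHA
  tau_comul : TensorProduct.map tau tau ∘ₗ comulHH =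
    (Coalgebra.comul : A →ₗ[R] A ⊗[R] A) ∘ₗ tau
  tau_counit : (Coalgebra.counit : A →ₗ[R] R) ∘ₗ tau = counitHH
  lact_one : ∀ h : H, lact (h ⊗ₜ (1 : A)) =
    algebraMap R A ((Coalgebra.counit : H →ₗ[R] R) h)
  one_lact : ∀ a : A, lact (one ⊗ₜ a) = a
  one_ract : ∀ a : A, ract (one ⊗ₜ a) = ((Coalgebra.counit : A →ₗ[R] R) a) • one
  ract_one : ∀ h : H, ract (h ⊗ₜ (1 : A)) = h
  tau_one : ∀ h : H, tau (h ⊗ₜ one) =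
    algebraMap R A ((Coalgebra.counit : H →ₗ[R] R) h)
  one_tau : ∀ h : H, tau (one ⊗ₜ h) =
    algebraMap R A ((Coalgebra.counit : H →ₗ[R] R) h)

namespace ExtendingDatum

variable (E : ExtendingDatum R A H)

/-- ψ(h ⊗ a) = Σ (h₍₁₎ ▷ a₍₁₎) ⊗ (h₍₂₎ ◁ a₍₂₎). -/
noncomputable def psiE : H ⊗[R] A →ₗ[R] A ⊗[R] H :=
  TensorProduct.map E.lact E.ract ∘ₗ comulHA

/-- σ(h ⊗ g) = Σ τ(h₍₁₎ ⊗ g₍₁₎) ⊗ h₍₂₎g₍₂₎. -/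
noncomputable def sigmaE : H ⊗[R] H →ₗ[R] A ⊗[R] H :=
  TensorProduct.map E.tau E.mul ∘ₗ comulHH

/-- (BE1): (g·h)·l = Σ (g ◁ τ(h₍₁₎ ⊗ l₍₁₎))·(h₍₂₎·l₍₂₎). -/
def BE1 : Prop :=
  E.mul ∘ₗ LinearMap.rTensor H E.mul =
    E.mul ∘ₗ LinearMap.rTensor H E.ract
      ∘ₗ (TensorProduct.assoc R H A H).symm.toLinearMap
      ∘ₗ LinearMap.lTensor H E.sigmaE
      ∘ₗ (TensorProduct.assoc R H H H).toLinearMap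

/-- (BE2): g ▷ (ab) = Σ (g₍₁₎ ▷ a₍₁₎)((g₍₂₎ ◁ a₍₂₎) ▷ b). -/
def BE2 : Prop :=
  E.lact ∘ₗ LinearMap.lTensor H (LinearMap.mul' R A) =
    LinearMap.mul' R A ∘ₗ LinearMap.lTensor A E.lact
      ∘ₗ (TensorProduct.assoc R A H A).toLinearMap
      ∘ₗ LinearMap.rTensor A E.psiE
      ∘ₗ (TensorProduct.assoc R H A A).symm.toLinearMap

/-- (BE3): (g·h) ◁ a = Σ (g ◁ (h₍₁₎ ▷ a₍₁₎))·(h₍₂₎ ◁ a₍₂₎). -/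
def BE3 : Prop :=
  E.ract ∘ₗ LinearMap.rTensor A E.mul =
    E.mul ∘ₗ LinearMap.rTensor H E.ract
      ∘ₗ (TensorProduct.assoc R H A H).symm.toLinearMap
      ∘ₗ LinearMap.lTensor H E.psiE
      ∘ₗ (TensorProduct.assoc R H H A).toLinearMap

/-- (BE4): μ_A ∘ (A ⊗ τ) ∘ (ψ ⊗ H) ∘ (H ⊗ ψ) = μ_A ∘ (A ⊗ ▷) ∘ (σ ⊗ A). -/
def BE4 : Prop :=
  LinearMap.mul' R A ∘ₗ LinearMap.lTensor A E.tau
      ∘ₗ (TensorProduct.assoc R A H H).toLinearMap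
      ∘ₗ LinearMap.rTensor H E.psiE
      ∘ₗ (TensorProduct.assoc R H A H).symm.toLinearMap
      ∘ₗ LinearMap.lTensor H E.psiE
      ∘ₗ (TensorProduct.assoc R H H A).toLinearMap =
    LinearMap.mul' R A ∘ₗ LinearMap.lTensor A E.lact
      ∘ₗ (TensorProduct.assoc R A H A).toLinearMap
      ∘ₗ LinearMap.rTensor A E.sigmaE

/-- (BE5): μ_A ∘ (A ⊗ τ) ∘ (ψ ⊗ H) ∘ (H ⊗ σ) = μ_A ∘ (A ⊗ τ) ∘ (σ ⊗ H). -/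
def BE5 : Prop :=
  LinearMap.mul' R A ∘ₗ LinearMap.lTensor A E.tau
      ∘ₗ (TensorProduct.assoc R A H H).toLinearMap
      ∘ₗ LinearMap.rTensor H E.psiE
      ∘ₗ (TensorProduct.assoc R H A H).symm.toLinearMap
      ∘ₗ LinearMap.lTensor H E.sigmaE
      ∘ₗ (TensorProduct.assoc R H H H).toLinearMap =
    LinearMap.mul' R A ∘ₗ LinearMap.lTensor A E.tau
      ∘ₗ (TensorProduct.assoc R A H H).toLinearMap
      ∘ₗ LinearMap.rTensor H E.sigmaE

/-- (BE6): c_{A,H} ∘ ψ = (◁ ⊗ ▷) ∘ δ_{H⊗A}. -/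
def BE6 : Prop :=
  (TensorProduct.comm R A H).toLinearMap ∘ₗ E.psiE =
    TensorProduct.map E.ract E.lact ∘ₗ comulHA

/-- (BE7): c_{A,H} ∘ σ = (μ_H ⊗ τ) ∘ δ_{H⊗H}. -/
def BE7 : Prop :=
  (TensorProduct.comm R A H).toLinearMap ∘ₗ E.sigmaE =
    TensorProduct.map E.mul E.tau ∘ₗ comulHH

/-- δ_H is multiplicative: δ_H(gh) = Σ g₍₁₎h₍₁₎ ⊗ g₍₂₎h₍₂₎. -/
def ComulMultiplicative : Prop :=
  (Coalgebra.comul : H →ₗ[R] H ⊗[R] H) ∘ₗ E.mul =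
    TensorProduct.map E.mul E.mul ∘ₗ comulHH

/-- ε_H is multiplicative: ε_H(gh) = ε_H(g)ε_H(h). -/
def CounitMultiplicative : Prop :=
  (Coalgebra.counit : H →ₗ[R] R) ∘ₗ E.mul = counitHH

/-- (H, ◁) is a right A-module. -/
def IsRightModule : Prop :=
  (∀ h : H, E.ract (h ⊗ₜ (1 : A)) = h) ∧
    E.ract ∘ₗ LinearMap.rTensor A E.ract =
      E.ract ∘ₗ LinearMap.lTensor H (LinearMap.mul' R A)
        ∘ₗ (TensorProduct.assoc R H A A).toLinearMap

end ExtendingDatum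


open Coalgebra in
lemma swap_mul {R C A' H' : Type*} [CommRing R] [AddCommGroup C] [Module R C] [Coalgebra R C]
    [Ring A'] [Algebra R A'] [AddCommGroup H'] [Module R H']
    (f g : C →ₗ[R] A') (k : C →ₗ[R] H') {c : C} {ι : Type*} {κ Λ : ι → Type*}
    (repr : Coalgebra.Repr R c ι)
    (r1 : (i : ι) → Coalgebra.Repr R (repr.left i) (κ i))
    (r2 : (i : ι) → Coalgebra.Repr R (repr.right i) (Λ i)) :
    ∑ i ∈ repr.index, ∑ j ∈ (r2 i).index,
      (f (repr.left i) * g ((r2 i).left j)) ⊗ₜ[R] k ((r2 i).right j) =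
    ∑ i ∈ repr.index, ∑ j ∈ (r1 i).index,
      (f ((r1 i).left j) * g ((r1 i).right j)) ⊗ₜ[R] k (repr.right i) := by
  have h := Coalgebra.sum_tmul_tmul_eq repr r1 r2
  apply_fun (TensorProduct.map (LinearMap.mul' R A' ∘ₗ TensorProduct.map f g) k
    ∘ₗ (TensorProduct.assoc R C C C).symm.toLinearMap) at h
  simpa [map_sum] using h.symm

open Coalgebra in
lemma psiE_tmul (E : ExtendingDatum R A H) (x : H) (y : A) {ι κ : Type*}
    (rx : Coalgebra.Repr R x ι) (ry : Coalgebra.Repr R y κ) :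
    E.psiE (x ⊗ₜ[R] y) = ∑ i ∈ rx.index, ∑ j ∈ ry.index,
      E.lact (rx.left i ⊗ₜ ry.left j) ⊗ₜ[R] E.ract (rx.right i ⊗ₜ ry.right j) := by
  simp only [ExtendingDatum.psiE, comulHA, LinearMap.comp_apply, LinearEquiv.coe_coe,
    TensorProduct.map_tmul]
  rw [← rx.eq, ← ry.eq]
  simp [TensorProduct.sum_tmul, TensorProduct.tmul_sum, map_sum]
  exact Finset.sum_comm


open Coalgebra in
lemma psiE_ract_tmul (E : ExtendingDatum R A H) (x : H) (y b' : A) {ι₁ ι₂ ι₃ : Type*}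
    (rx : Coalgebra.Repr R x ι₁) (ry : Coalgebra.Repr R y ι₂) (rb : Coalgebra.Repr R b' ι₃) :
    E.psiE (E.ract (x ⊗ₜ[R] y) ⊗ₜ[R] b') = ∑ i ∈ rx.index, ∑ j ∈ ry.index, ∑ k ∈ rb.index,
      E.lact (E.ract (rx.left i ⊗ₜ ry.left j) ⊗ₜ rb.left k) ⊗ₜ[R]
        E.ract (E.ract (rx.right i ⊗ₜ ry.right j) ⊗ₜ rb.right k) := by
  have hc : (Coalgebra.comul (R := R)) (E.ract (x ⊗ₜ[R] y)) =
      ∑ i ∈ rx.index, ∑ j ∈ ry.index,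
        E.ract (rx.left i ⊗ₜ ry.left j) ⊗ₜ[R] E.ract (rx.right i ⊗ₜ ry.right j) := by
    have h := LinearMap.congr_fun E.ract_comul (x ⊗ₜ[R] y)
    simp only [LinearMap.comp_apply, comulHA, LinearEquiv.coe_coe, TensorProduct.map_tmul] at h
    rw [← rx.eq, ← ry.eq] at h
    simp only [TensorProduct.sum_tmul, TensorProduct.tmul_sum, map_sum,
      TensorProduct.tensorTensorTensorComm_tmul, TensorProduct.map_tmul] at h
    rw [← h, Finset.sum_comm]
  simp only [ExtendingDatum.psiE, comulHA, LinearMap.comp_apply, LinearEquiv.coe_coe,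
    TensorProduct.map_tmul]
  rw [hc, ← rb.eq]
  simp only [TensorProduct.sum_tmul, TensorProduct.tmul_sum, map_sum,
    TensorProduct.tensorTensorTensorComm_tmul, TensorProduct.map_tmul]
  rw [Finset.sum_comm]
  refine Finset.sum_congr rfl fun i _ => ?_
  rw [Finset.sum_comm]


open Coalgebra in
lemma be2_sum (E : ExtendingDatum R A H) (hBE2 : E.BE2) (u : H) (v w : A) {ι κ : Type*}
    (ru : Coalgebra.Repr R u ι) (rv : Coalgebra.Repr R v κ) :
    ∑ i ∈ ru.index, ∑ j ∈ rv.index,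
      E.lact (ru.left i ⊗ₜ rv.left j) *
        E.lact (E.ract (ru.right i ⊗ₜ rv.right j) ⊗ₜ w)
      = E.lact (u ⊗ₜ (v * w)) := by
  have h := LinearMap.congr_fun hBE2 (u ⊗ₜ[R] (v ⊗ₜ[R] w))
  simp only [LinearMap.comp_apply, LinearEquiv.coe_coe, TensorProduct.assoc_symm_tmul,
    LinearMap.rTensor_tmul, LinearMap.lTensor_tmul, LinearMap.mul'_apply] at h
  rw [psiE_tmul E u v ru rv] at h
  simp only [TensorProduct.sum_tmul, map_sum, TensorProduct.assoc_tmul,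
    LinearMap.lTensor_tmul, LinearMap.mul'_apply] at h
  exact h.symm

/-- If an extending datum satisfies (BE2) and (H, ◁) is a right A-module, then
ψ(h ⊗ a) = Σ (h₍₁₎ ▷ a₍₁₎) ⊗ (h₍₂₎ ◁ a₍₂₎) satisfies
(μ_A ⊗ H) ∘ (A ⊗ ψ) ∘ (ψ ⊗ A) = ψ ∘ (H ⊗ μ_A). -/
theorem psiE_mul (E : ExtendingDatum R A H)
    (hBE2 : E.BE2) (hmod : E.IsRightModule) :
    psiMulLHS E.psiE = psiMulRHS E.psiE := by
  obtain ⟨-, hmod2⟩ := hmod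
  have hm : ∀ (u : H) (v w : A), E.ract (E.ract (u ⊗ₜ[R] v) ⊗ₜ[R] w) =
      E.ract (u ⊗ₜ (v * w)) := by
    intro u v w
    have h := LinearMap.congr_fun hmod2 ((u ⊗ₜ[R] v) ⊗ₜ[R] w)
    simpa using h
  refine TensorProduct.ext_threefold fun x a b => ?_
  have rh : Coalgebra.Repr R x (H × H) := Coalgebra.Repr.arbitrary R x
  have ra : Coalgebra.Repr R a (A × A) := Coalgebra.Repr.arbitrary R a
  have rb : Coalgebra.Repr R b (A × A) := Coalgebra.Repr.arbitrary R b
  have r1h : ∀ i, Coalgebra.Repr R (rh.left i) (H × H) := fun i => Coalgebra.Repr.arbitrary R _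
  have r2h : ∀ i, Coalgebra.Repr R (rh.right i) (H × H) := fun i => Coalgebra.Repr.arbitrary R _
  have r1a : ∀ j, Coalgebra.Repr R (ra.left j) (A × A) := fun j => Coalgebra.Repr.arbitrary R _
  have r2a : ∀ j, Coalgebra.Repr R (ra.right j) (A × A) := fun j => Coalgebra.Repr.arbitrary R _
  calc psiMulLHS E.psiE ((x ⊗ₜ[R] a) ⊗ₜ[R] b)
      = ∑ i ∈ rh.index, ∑ j ∈ ra.index, ∑ i' ∈ (r2h i).index, ∑ j' ∈ (r2a j).index,
          ∑ k ∈ rb.index,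
          (E.lact (rh.left i ⊗ₜ ra.left j) *
            E.lact (E.ract ((r2h i).left i' ⊗ₜ (r2a j).left j') ⊗ₜ rb.left k)) ⊗ₜ[R]
          E.ract (E.ract ((r2h i).right i' ⊗ₜ (r2a j).right j') ⊗ₜ rb.right k) := by
        rw [psiMulLHS]
        simp only [LinearMap.comp_apply, LinearEquiv.coe_coe, LinearMap.rTensor_tmul]
        rw [psiE_tmul E x a rh ra]
        simp only [TensorProduct.sum_tmul, map_sum, TensorProduct.assoc_tmul,
          LinearMap.lTensor_tmul]
        refine Finset.sum_congr rfl fun i _ => Finset.sum_congr rfl fun j _ => ?_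
        rw [psiE_ract_tmul E _ _ _ (r2h i) (r2a j) rb]
        simp only [TensorProduct.tmul_sum, map_sum, TensorProduct.assoc_symm_tmul,
          TensorProduct.map_tmul, LinearMap.mul'_apply, LinearMap.id_coe, id_eq]
    _ = ∑ j ∈ ra.index, ∑ j' ∈ (r2a j).index, ∑ k ∈ rb.index,
          ∑ i ∈ rh.index, ∑ i' ∈ (r2h i).index,
          (E.lact (rh.left i ⊗ₜ ra.left j) *
            E.lact (E.ract ((r2h i).left i' ⊗ₜ (r2a j).left j') ⊗ₜ rb.left k)) ⊗ₜ[R]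
          E.ract (E.ract ((r2h i).right i' ⊗ₜ (r2a j).right j') ⊗ₜ rb.right k) := by
        rw [Finset.sum_comm]
        refine Finset.sum_congr rfl fun j _ => ?_
        trans ∑ i ∈ rh.index, ∑ j' ∈ (r2a j).index, ∑ k ∈ rb.index,
          ∑ i' ∈ (r2h i).index, (E.lact (rh.left i ⊗ₜ ra.left j) * E.lact (E.ract ((r2h i).left i' ⊗ₜ (r2a j).left j') ⊗ₜ rb.left k)) ⊗ₜ[R] E.ract (E.ract ((r2h i).right i' ⊗ₜ (r2a j).right j') ⊗ₜ rb.right k)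
        · refine Finset.sum_congr rfl fun i _ => ?_
          rw [Finset.sum_comm]
          exact Finset.sum_congr rfl fun j' _ => Finset.sum_comm
        · rw [Finset.sum_comm]
          exact Finset.sum_congr rfl fun j' _ => Finset.sum_comm
    _ = ∑ j ∈ ra.index, ∑ j' ∈ (r2a j).index, ∑ k ∈ rb.index,
          ∑ i ∈ rh.index, ∑ i' ∈ (r1h i).index,
          (E.lact ((r1h i).left i' ⊗ₜ ra.left j) *
            E.lact (E.ract ((r1h i).right i' ⊗ₜ (r2a j).left j') ⊗ₜ rb.left k)) ⊗ₜ[R]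
          E.ract (E.ract (rh.right i ⊗ₜ (r2a j).right j') ⊗ₜ rb.right k) := by
        refine Finset.sum_congr rfl fun j _ => Finset.sum_congr rfl fun j' _ =>
          Finset.sum_congr rfl fun k _ => ?_
        have h := swap_mul (R := R)
          (E.lact ∘ₗ (TensorProduct.mk R H A).flip (ra.left j))
          (E.lact ∘ₗ (TensorProduct.mk R H A).flip (rb.left k) ∘ₗ E.ract ∘ₗ
            (TensorProduct.mk R H A).flip ((r2a j).left j'))
          (E.ract ∘ₗ (TensorProduct.mk R H A).flip (rb.right k) ∘ₗ E.ract ∘ₗ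
            (TensorProduct.mk R H A).flip ((r2a j).right j'))
          rh r1h r2h
        simpa using h
    _ = ∑ k ∈ rb.index, ∑ i ∈ rh.index, ∑ i' ∈ (r1h i).index,
          ∑ j ∈ ra.index, ∑ j' ∈ (r2a j).index,
          (E.lact ((r1h i).left i' ⊗ₜ ra.left j) *
            E.lact (E.ract ((r1h i).right i' ⊗ₜ (r2a j).left j') ⊗ₜ rb.left k)) ⊗ₜ[R]
          E.ract (E.ract (rh.right i ⊗ₜ (r2a j).right j') ⊗ₜ rb.right k) := by
        trans ∑ j ∈ ra.index, ∑ k ∈ rb.index, ∑ i ∈ rh.index,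
          ∑ i' ∈ (r1h i).index, ∑ j' ∈ (r2a j).index, (E.lact ((r1h i).left i' ⊗ₜ ra.left j) * E.lact (E.ract ((r1h i).right i' ⊗ₜ (r2a j).left j') ⊗ₜ rb.left k)) ⊗ₜ[R] E.ract (E.ract (rh.right i ⊗ₜ (r2a j).right j') ⊗ₜ rb.right k)
        · refine Finset.sum_congr rfl fun j _ => ?_
          trans ∑ k ∈ rb.index, ∑ j' ∈ (r2a j).index, ∑ i ∈ rh.index,
            ∑ i' ∈ (r1h i).index, (E.lact ((r1h i).left i' ⊗ₜ ra.left j) * E.lact (E.ract ((r1h i).right i' ⊗ₜ (r2a j).left j') ⊗ₜ rb.left k)) ⊗ₜ[R] E.ract (E.ract (rh.right i ⊗ₜ (r2a j).right j') ⊗ₜ rb.right k)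
          · exact Finset.sum_comm
          · refine Finset.sum_congr rfl fun k _ => ?_
            trans ∑ i ∈ rh.index, ∑ j' ∈ (r2a j).index, ∑ i' ∈ (r1h i).index, (E.lact ((r1h i).left i' ⊗ₜ ra.left j) * E.lact (E.ract ((r1h i).right i' ⊗ₜ (r2a j).left j') ⊗ₜ rb.left k)) ⊗ₜ[R] E.ract (E.ract (rh.right i ⊗ₜ (r2a j).right j') ⊗ₜ rb.right k)
            · exact Finset.sum_comm
            · exact Finset.sum_congr rfl fun i _ => Finset.sum_comm
        · rw [Finset.sum_comm]
          refine Finset.sum_congr rfl fun k _ => ?_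
          rw [Finset.sum_comm]
          exact Finset.sum_congr rfl fun i _ => Finset.sum_comm
    _ = ∑ k ∈ rb.index, ∑ i ∈ rh.index, ∑ i' ∈ (r1h i).index,
          ∑ j ∈ ra.index, ∑ j' ∈ (r1a j).index,
          (E.lact ((r1h i).left i' ⊗ₜ (r1a j).left j') *
            E.lact (E.ract ((r1h i).right i' ⊗ₜ (r1a j).right j') ⊗ₜ rb.left k)) ⊗ₜ[R]
          E.ract (E.ract (rh.right i ⊗ₜ ra.right j) ⊗ₜ rb.right k) := by
        refine Finset.sum_congr rfl fun k _ => Finset.sum_congr rfl fun i _ =>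
          Finset.sum_congr rfl fun i' _ => ?_
        have h := swap_mul (R := R)
          (E.lact ∘ₗ TensorProduct.mk R H A ((r1h i).left i'))
          (E.lact ∘ₗ (TensorProduct.mk R H A).flip (rb.left k) ∘ₗ E.ract ∘ₗ
            TensorProduct.mk R H A ((r1h i).right i'))
          (E.ract ∘ₗ (TensorProduct.mk R H A).flip (rb.right k) ∘ₗ E.ract ∘ₗ
            TensorProduct.mk R H A (rh.right i))
          ra r1a r2a
        simpa using h
    _ = ∑ k ∈ rb.index, ∑ i ∈ rh.index, ∑ j ∈ ra.index,
          E.lact (rh.left i ⊗ₜ (ra.left j * rb.left k)) ⊗ₜ[R]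
          E.ract (rh.right i ⊗ₜ (ra.right j * rb.right k)) := by
        refine Finset.sum_congr rfl fun k _ => Finset.sum_congr rfl fun i _ => ?_
        rw [Finset.sum_comm]
        refine Finset.sum_congr rfl fun j _ => ?_
        rw [hm]
        rw [← be2_sum E hBE2 (rh.left i) (ra.left j) (rb.left k) (r1h i) (r1a j)]
        simp [TensorProduct.sum_tmul]
    _ = ∑ i ∈ rh.index, ∑ j ∈ ra.index, ∑ k ∈ rb.index,
          E.lact (rh.left i ⊗ₜ (ra.left j * rb.left k)) ⊗ₜ[R]
          E.ract (rh.right i ⊗ₜ (ra.right j * rb.right k)) := by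
        rw [Finset.sum_comm]
        exact Finset.sum_congr rfl fun i _ => Finset.sum_comm
    _ = psiMulRHS E.psiE ((x ⊗ₜ[R] a) ⊗ₜ[R] b) := by
        rw [psiMulRHS]
        simp only [LinearMap.comp_apply, LinearEquiv.coe_coe, TensorProduct.assoc_tmul,
          LinearMap.lTensor_tmul, LinearMap.mul'_apply, ExtendingDatum.psiE, comulHA,
          TensorProduct.map_tmul]
        rw [← rh.eq, Bialgebra.comul_mul, ← ra.eq, ← rb.eq, Finset.sum_mul_sum]
        simp only [Algebra.TensorProduct.tmul_mul_tmul, TensorProduct.sum_tmul,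
          TensorProduct.tmul_sum, map_sum, TensorProduct.tensorTensorTensorComm_tmul,
          TensorProduct.map_tmul]
        rw [Finset.sum_comm]
        exact Finset.sum_congr rfl fun j _ => Finset.sum_comm
end

section
/- Let Ω(A) be an extending datum of a bialgebra A with ε_H multiplicative (ε_H(gh) = ε_H(g)ε_H(h)), and let ψ(h ⊗ a) = Σ (h₍₁₎ ▷ a₍₁₎) ⊗ (h₍₂₎ ◁ a₍₂₎) and σ(h ⊗ g) = Σ τ(h₍₁₎ ⊗ g₍₁₎) ⊗ h₍₂₎g₍₂₎. If the twisted condition (μ_A ⊗ H) ∘ (A ⊗ ψ) ∘ (σ ⊗ A) = (μ_A ⊗ H) ∘ (A ⊗ σ) ∘ (ψ ⊗ H) ∘ (H ⊗ ψ) holds, then (BE4) holds: Σ (g₍₁₎ ▷ (h₍₁₎ ▷ a₍₁₎)) τ((g₍₂₎ ◁ (h₍₂₎ ▷ a₍₂₎)) ⊗ (h₍₃₎ ◁ a₍₃₎)) = Σ τ(g₍₁₎ ⊗ h₍₁₎)((g₍₂₎ h₍₂₎) ▷ a). -/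
open TensorProduct

variable {R A V H : Type*} [CommRing R] [Ring A] [Bialgebra R A]
  [AddCommGroup V] [Module R V] [AddCommGroup H] [Module R H] [Coalgebra R H]

/-- Twisted condition LHS: (μ_A ⊗ V) ∘ (A ⊗ ψ) ∘ (σ ⊗ A) : (V ⊗ V) ⊗ A → A ⊗ V. -/
noncomputable def twistedLHS (ψ : V ⊗[R] A →ₗ[R] A ⊗[R] V)
    (σ : V ⊗[R] V →ₗ[R] A ⊗[R] V) : (V ⊗[R] V) ⊗[R] A →ₗ[R] A ⊗[R] V :=
  TensorProduct.map (LinearMap.mul' R A) LinearMap.id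
    ∘ₗ (TensorProduct.assoc R A A V).symm.toLinearMap
    ∘ₗ LinearMap.lTensor A ψ
    ∘ₗ (TensorProduct.assoc R A V A).toLinearMap
    ∘ₗ LinearMap.rTensor A σ

/-- Twisted condition RHS: (μ_A ⊗ V) ∘ (A ⊗ σ) ∘ (ψ ⊗ V) ∘ (V ⊗ ψ) : V ⊗ (V ⊗ A) → A ⊗ V. -/
noncomputable def twistedRHS (ψ : V ⊗[R] A →ₗ[R] A ⊗[R] V)
    (σ : V ⊗[R] V →ₗ[R] A ⊗[R] V) : V ⊗[R] (V ⊗[R] A) →ₗ[R] A ⊗[R] V :=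
  TensorProduct.map (LinearMap.mul' R A) LinearMap.id
    ∘ₗ (TensorProduct.assoc R A A V).symm.toLinearMap
    ∘ₗ LinearMap.lTensor A σ
    ∘ₗ (TensorProduct.assoc R A V V).toLinearMap
    ∘ₗ LinearMap.rTensor V ψ
    ∘ₗ (TensorProduct.assoc R V A V).symm.toLinearMap
    ∘ₗ LinearMap.lTensor V ψ

/-- Cocycle condition LHS: (μ_A ⊗ V) ∘ (A ⊗ σ) ∘ (σ ⊗ V) : (V ⊗ V) ⊗ V → A ⊗ V. -/
noncomputable def cocycleLHS (σ : V ⊗[R] V →ₗ[R] A ⊗[R] V) :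
    (V ⊗[R] V) ⊗[R] V →ₗ[R] A ⊗[R] V :=
  TensorProduct.map (LinearMap.mul' R A) LinearMap.id
    ∘ₗ (TensorProduct.assoc R A A V).symm.toLinearMap
    ∘ₗ LinearMap.lTensor A σ
    ∘ₗ (TensorProduct.assoc R A V V).toLinearMap
    ∘ₗ LinearMap.rTensor V σ

/-- Cocycle condition RHS: (μ_A ⊗ V) ∘ (A ⊗ σ) ∘ (ψ ⊗ V) ∘ (V ⊗ σ) : V ⊗ (V ⊗ V) → A ⊗ V. -/
noncomputable def cocycleRHS (ψ : V ⊗[R] A →ₗ[R] A ⊗[R] V)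
    (σ : V ⊗[R] V →ₗ[R] A ⊗[R] V) : V ⊗[R] (V ⊗[R] V) →ₗ[R] A ⊗[R] V :=
  TensorProduct.map (LinearMap.mul' R A) LinearMap.id
    ∘ₗ (TensorProduct.assoc R A A V).symm.toLinearMap
    ∘ₗ LinearMap.lTensor A σ
    ∘ₗ (TensorProduct.assoc R A V V).toLinearMap
    ∘ₗ LinearMap.rTensor V ψ
    ∘ₗ (TensorProduct.assoc R V A V).symm.toLinearMap
    ∘ₗ LinearMap.lTensor V σ

/-- Auxiliary map V ⊗ (A ⊗ V) → A ⊗ V used in the weak crossed product. -/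
noncomputable def wcpAux (ψ : V ⊗[R] A →ₗ[R] A ⊗[R] V)
    (σ : V ⊗[R] V →ₗ[R] A ⊗[R] V) : V ⊗[R] (A ⊗[R] V) →ₗ[R] A ⊗[R] V :=
  TensorProduct.map (LinearMap.mul' R A) LinearMap.id
    ∘ₗ (TensorProduct.assoc R A A V).symm.toLinearMap
    ∘ₗ LinearMap.lTensor A σ
    ∘ₗ (TensorProduct.assoc R A V V).toLinearMap
    ∘ₗ LinearMap.rTensor V ψ
    ∘ₗ (TensorProduct.assoc R V A V).symm.toLinearMap

/-- The weak crossed product multiplication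
μ_{A⊗V} = (μ_A ⊗ V) ∘ (μ_A ⊗ σ) ∘ (A ⊗ ψ ⊗ V) on A ⊗ V. -/
noncomputable def wcpMul (ψ : V ⊗[R] A →ₗ[R] A ⊗[R] V)
    (σ : V ⊗[R] V →ₗ[R] A ⊗[R] V) :
    (A ⊗[R] V) ⊗[R] (A ⊗[R] V) →ₗ[R] A ⊗[R] V :=
  TensorProduct.map (LinearMap.mul' R A) LinearMap.id
    ∘ₗ (TensorProduct.assoc R A A V).symm.toLinearMap
    ∘ₗ LinearMap.lTensor A (wcpAux ψ σ)
    ∘ₗ (TensorProduct.assoc R A V (A ⊗[R] V)).toLinearMap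


section AuxBE4

open Coalgebra

variable {R A H : Type*} [CommRing R] [Ring A] [Bialgebra R A]
  [AddCommGroup H] [Module R H] [Coalgebra R H]

lemma sum_counit_smul_eq {B : Type*} [AddCommGroup B] [Module R B] [Coalgebra R B]
    {b : B} {ι : Type*} (repr : Coalgebra.Repr R b ι) :
    ∑ i ∈ repr.index, Coalgebra.counit (R := R) (repr.right i) • repr.left i = b := by
  have h := Coalgebra.sum_tmul_counit_eq (R := R) repr
  calc ∑ i ∈ repr.index, Coalgebra.counit (R := R) (repr.right i) • repr.left i
      = TensorProduct.rid R B (∑ i ∈ repr.index,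
          repr.left i ⊗ₜ Coalgebra.counit (R := R) (repr.right i)) := by
        rw [map_sum]; simp only [TensorProduct.rid_tmul]
    _ = TensorProduct.rid R B (b ⊗ₜ[R] 1) := by rw [h]
    _ = b := by simp

lemma lTensor_counitBC_comulBC {B C : Type*}
    [AddCommGroup B] [Module R B] [Coalgebra R B]
    [AddCommGroup C] [Module R C] [Coalgebra R C] (b : B) (c : C) :
    LinearMap.lTensor (B ⊗[R] C)
      ((TensorProduct.lid R R).toLinearMap ∘ₗ
        TensorProduct.map (Coalgebra.counit : B →ₗ[R] R) (Coalgebra.counit : C →ₗ[R] R))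
      (((TensorProduct.tensorTensorTensorComm R B B C C).toLinearMap ∘ₗ
        TensorProduct.map (Coalgebra.comul : B →ₗ[R] B ⊗[R] B)
          (Coalgebra.comul : C →ₗ[R] C ⊗[R] C)) (b ⊗ₜ c))
      = (b ⊗ₜ[R] c) ⊗ₜ[R] (1 : R) := by
  set rb := Coalgebra.Repr.arbitrary R b with hrb
  set rc := Coalgebra.Repr.arbitrary R c with hrc
  simp only [LinearMap.comp_apply, TensorProduct.map_tmul, LinearEquiv.coe_coe]
  rw [show (Coalgebra.comul : B →ₗ[R] B ⊗[R] B) b = CoalgebraStruct.comul b from rfl,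
    show (Coalgebra.comul : C →ₗ[R] C ⊗[R] C) c = CoalgebraStruct.comul c from rfl,
    ← rb.eq, ← rc.eq]
  simp only [TensorProduct.sum_tmul, TensorProduct.tmul_sum, map_sum,
    TensorProduct.tensorTensorTensorComm_tmul, LinearMap.lTensor_tmul,
    LinearMap.comp_apply, TensorProduct.map_tmul, LinearEquiv.coe_coe,
    TensorProduct.lid_tmul, TensorProduct.tmul_smul]
  conv_rhs => rw [← sum_counit_smul_eq rb, ← sum_counit_smul_eq rc]
  simp only [TensorProduct.sum_tmul, TensorProduct.tmul_sum, TensorProduct.smul_tmul',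
    TensorProduct.tmul_smul, Finset.smul_sum, smul_smul]
  have hterm : ∀ (r s : R) (m : B) (n : C),
      ((s • m) ⊗ₜ[R] n) ⊗ₜ[R] r = (((r * s) • m) ⊗ₜ[R] n) ⊗ₜ[R] (1 : R) := by
    intro r s m n
    calc ((s • m) ⊗ₜ[R] n) ⊗ₜ[R] r
        = r • (((s • m) ⊗ₜ[R] n) ⊗ₜ[R] (1 : R)) := by
          rw [← TensorProduct.tmul_smul, smul_eq_mul, mul_one]
      _ = ((r • s • m) ⊗ₜ[R] n) ⊗ₜ[R] (1 : R) := by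
          rw [TensorProduct.smul_tmul', TensorProduct.smul_tmul']
      _ = (((r * s) • m) ⊗ₜ[R] n) ⊗ₜ[R] (1 : R) := by rw [smul_smul]
  exact Finset.sum_congr rfl fun i _ => Finset.sum_congr rfl fun j _ => hterm ..

/-- φ : A ⊗ H → A, a ⊗ h ↦ ε(h) • a. -/
noncomputable def phiA (R A H : Type*) [CommRing R] [Ring A] [Bialgebra R A]
    [AddCommGroup H] [Module R H] [Coalgebra R H] : A ⊗[R] H →ₗ[R] A :=
  (TensorProduct.rid R A).toLinearMap ∘ₗ
    LinearMap.lTensor A (Coalgebra.counit : H →ₗ[R] R)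

lemma phiA_tmul (a : A) (h : H) :
    phiA R A H (a ⊗ₜ h) = Coalgebra.counit (R := R) h • a := by
  simp [phiA]

/-- key structural lemma -/
lemma phiA_comp_mul_assoc {W : Type*} [AddCommGroup W] [Module R W]
    (f : W →ₗ[R] A ⊗[R] H) :
    phiA R A H ∘ₗ (TensorProduct.map (LinearMap.mul' R A) LinearMap.id
      ∘ₗ (TensorProduct.assoc R A A H).symm.toLinearMap
      ∘ₗ LinearMap.lTensor A f)
    = LinearMap.mul' R A ∘ₗ LinearMap.lTensor A (phiA R A H ∘ₗ f) := by
  apply TensorProduct.ext'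
  intro a w
  simp only [LinearMap.comp_apply, LinearMap.lTensor_tmul]
  induction f w using TensorProduct.induction_on with
  | zero => simp
  | tmul b h => simp [phiA, LinearMap.mul'_apply, TensorProduct.tmul_smul, mul_smul_comm]
  | add x y hx hy => simp only [TensorProduct.tmul_add, map_add, hx, hy]

lemma phiA_comp_psiE (E : ExtendingDatum R A H) :
    phiA R A H ∘ₗ E.psiE = E.lact := by
  apply TensorProduct.ext'
  intro h a
  have hcu : ∀ x : H ⊗[R] A, Coalgebra.counit (R := R) (E.ract x) = counitHA x :=
    fun x => congr($(E.ract_counit) x)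
  have step : phiA R A H ∘ₗ TensorProduct.map E.lact E.ract
      = E.lact ∘ₗ (TensorProduct.rid R (H ⊗[R] A)).toLinearMap
        ∘ₗ LinearMap.lTensor (H ⊗[R] A) (counitHA (R := R) (A := A) (H := H)) := by
    apply TensorProduct.ext'
    intro x y
    simp only [LinearMap.comp_apply, TensorProduct.map_tmul, phiA_tmul, hcu,
      LinearMap.lTensor_tmul, LinearEquiv.coe_coe, TensorProduct.rid_tmul, map_smul]
  show (phiA R A H ∘ₗ TensorProduct.map E.lact E.ract) (comulHA (h ⊗ₜ a)) = E.lact (h ⊗ₜ a)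
  rw [step]
  simp only [LinearMap.comp_apply]
  rw [show (comulHA (h ⊗ₜ a) : (H ⊗[R] A) ⊗[R] (H ⊗[R] A))
      = ((TensorProduct.tensorTensorTensorComm R H H A A).toLinearMap ∘ₗ
          TensorProduct.map (Coalgebra.comul : H →ₗ[R] H ⊗[R] H)
            (Coalgebra.comul : A →ₗ[R] A ⊗[R] A)) (h ⊗ₜ a) from rfl,
    show (LinearMap.lTensor (H ⊗[R] A) (counitHA (R := R) (A := A) (H := H)))
      = LinearMap.lTensor (H ⊗[R] A)
        ((TensorProduct.lid R R).toLinearMap ∘ₗ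
          TensorProduct.map (Coalgebra.counit : H →ₗ[R] R)
            (Coalgebra.counit : A →ₗ[R] R)) from rfl,
    lTensor_counitBC_comulBC]
  simp

lemma phiA_comp_sigmaE (E : ExtendingDatum R A H)
    (hε : E.CounitMultiplicative) :
    phiA R A H ∘ₗ E.sigmaE = E.tau := by
  apply TensorProduct.ext'
  intro g h
  have hcu : ∀ x : H ⊗[R] H, Coalgebra.counit (R := R) (E.mul x) = counitHH x :=
    fun x => congr($(hε) x)
  have step : phiA R A H ∘ₗ TensorProduct.map E.tau E.mul
      = E.tau ∘ₗ (TensorProduct.rid R (H ⊗[R] H)).toLinearMap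
        ∘ₗ LinearMap.lTensor (H ⊗[R] H) (counitHH (R := R) (H := H)) := by
    apply TensorProduct.ext'
    intro x y
    simp only [LinearMap.comp_apply, TensorProduct.map_tmul, phiA_tmul, hcu,
      LinearMap.lTensor_tmul, LinearEquiv.coe_coe, TensorProduct.rid_tmul, map_smul]
  show (phiA R A H ∘ₗ TensorProduct.map E.tau E.mul) (comulHH (g ⊗ₜ h)) = E.tau (g ⊗ₜ h)
  rw [step]
  simp only [LinearMap.comp_apply]
  rw [show (comulHH (g ⊗ₜ h) : (H ⊗[R] H) ⊗[R] (H ⊗[R] H))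
      = ((TensorProduct.tensorTensorTensorComm R H H H H).toLinearMap ∘ₗ
          TensorProduct.map (Coalgebra.comul : H →ₗ[R] H ⊗[R] H)
            (Coalgebra.comul : H →ₗ[R] H ⊗[R] H)) (g ⊗ₜ h) from rfl,
    show (LinearMap.lTensor (H ⊗[R] H) (counitHH (R := R) (H := H)))
      = LinearMap.lTensor (H ⊗[R] H)
        ((TensorProduct.lid R R).toLinearMap ∘ₗ
          TensorProduct.map (Coalgebra.counit : H →ₗ[R] R)
            (Coalgebra.counit : H →ₗ[R] R)) from rfl,
    lTensor_counitBC_comulBC]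
  simp

end AuxBE4

/-- If ε_H is multiplicative and the weak crossed product twisted condition
holds for ψ and σ of an extending datum, then (BE4) holds. -/
theorem twisted_implies_BE4 (E : ExtendingDatum R A H)
    (hε : E.CounitMultiplicative)
    (htw : twistedLHS E.psiE E.sigmaE =
      twistedRHS E.psiE E.sigmaE ∘ₗ (TensorProduct.assoc R H H A).toLinearMap) :
    E.BE4 := by
  have h1 : phiA R A H ∘ₗ twistedLHS E.psiE E.sigmaE =
      LinearMap.mul' R A ∘ₗ LinearMap.lTensor A E.lact
        ∘ₗ (TensorProduct.assoc R A H A).toLinearMap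
        ∘ₗ LinearMap.rTensor A E.sigmaE := by
    rw [twistedLHS,
      show TensorProduct.map (LinearMap.mul' R A) LinearMap.id
        ∘ₗ (TensorProduct.assoc R A A H).symm.toLinearMap
        ∘ₗ LinearMap.lTensor A E.psiE
        ∘ₗ (TensorProduct.assoc R A H A).toLinearMap
        ∘ₗ LinearMap.rTensor A E.sigmaE
        = (TensorProduct.map (LinearMap.mul' R A) LinearMap.id
          ∘ₗ (TensorProduct.assoc R A A H).symm.toLinearMap
          ∘ₗ LinearMap.lTensor A E.psiE)
          ∘ₗ ((TensorProduct.assoc R A H A).toLinearMap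
          ∘ₗ LinearMap.rTensor A E.sigmaE) by
        simp only [LinearMap.comp_assoc],
      ← LinearMap.comp_assoc, phiA_comp_mul_assoc, phiA_comp_psiE]
    simp only [LinearMap.comp_assoc]
  have h2 : phiA R A H ∘ₗ (twistedRHS E.psiE E.sigmaE
        ∘ₗ (TensorProduct.assoc R H H A).toLinearMap) =
      LinearMap.mul' R A ∘ₗ LinearMap.lTensor A E.tau
        ∘ₗ (TensorProduct.assoc R A H H).toLinearMap
        ∘ₗ LinearMap.rTensor H E.psiE
        ∘ₗ (TensorProduct.assoc R H A H).symm.toLinearMap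
        ∘ₗ LinearMap.lTensor H E.psiE
        ∘ₗ (TensorProduct.assoc R H H A).toLinearMap := by
    rw [twistedRHS,
      show (TensorProduct.map (LinearMap.mul' R A) LinearMap.id
        ∘ₗ (TensorProduct.assoc R A A H).symm.toLinearMap
        ∘ₗ LinearMap.lTensor A E.sigmaE
        ∘ₗ (TensorProduct.assoc R A H H).toLinearMap
        ∘ₗ LinearMap.rTensor H E.psiE
        ∘ₗ (TensorProduct.assoc R H A H).symm.toLinearMap
        ∘ₗ LinearMap.lTensor H E.psiE)
        ∘ₗ (TensorProduct.assoc R H H A).toLinearMap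
        = (TensorProduct.map (LinearMap.mul' R A) LinearMap.id
          ∘ₗ (TensorProduct.assoc R A A H).symm.toLinearMap
          ∘ₗ LinearMap.lTensor A E.sigmaE)
          ∘ₗ ((TensorProduct.assoc R A H H).toLinearMap
          ∘ₗ LinearMap.rTensor H E.psiE
          ∘ₗ (TensorProduct.assoc R H A H).symm.toLinearMap
          ∘ₗ LinearMap.lTensor H E.psiE
          ∘ₗ (TensorProduct.assoc R H H A).toLinearMap) by
        simp only [LinearMap.comp_assoc],
      ← LinearMap.comp_assoc, phiA_comp_mul_assoc, phiA_comp_sigmaE E hε]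
    simp only [LinearMap.comp_assoc]
  rw [ExtendingDatum.BE4, ← h1, ← h2, htw]
end

section
/- Let Ω(A) be an extending datum of a bialgebra A satisfying (BE1) ((g·h)·l = Σ (g ◁ τ(h₍₁₎ ⊗ l₍₁₎))·(h₍₂₎·l₍₂₎)), (BE5), (BE7) (Σ g₍₁₎h₍₁₎ ⊗ τ(g₍₂₎ ⊗ h₍₂₎) = Σ g₍₂₎h₍₂₎ ⊗ τ(g₍₁₎ ⊗ h₍₁₎)) and with δ_H multiplicative. Then the cocycle condition (μ_A ⊗ H) ∘ (A ⊗ σ) ∘ (σ ⊗ H) = (μ_A ⊗ H) ∘ (A ⊗ σ) ∘ (ψ ⊗ H) ∘ (H ⊗ σ) holds for ψ and σ as in the unified product construction. -/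
open TensorProduct

variable {R A V H : Type*} [CommRing R] [Ring A] [Bialgebra R A]
  [AddCommGroup V] [Module R V] [AddCommGroup H] [Module R H] [Coalgebra R H]

/- ===================== Auxiliary development ===================== -/

namespace BEcocycle

open Coalgebra LinearMap

section PointwiseNat

variable {M N P Q M' N' P' Q' : Type*}
  [AddCommGroup M] [Module R M] [AddCommGroup N] [Module R N]
  [AddCommGroup P] [Module R P] [AddCommGroup Q] [Module R Q]
  [AddCommGroup M'] [Module R M'] [AddCommGroup N'] [Module R N']
  [AddCommGroup P'] [Module R P'] [AddCommGroup Q'] [Module R Q']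

/-- associator naturality, pointwise, with an opaque left pair -/
lemma assoc_map_tmul (f : M →ₗ[R] M') (g : N →ₗ[R] N') (s : M ⊗[R] N) (z : P) :
    (TensorProduct.assoc R M' N' P) ((TensorProduct.map f g) s ⊗ₜ z) =
      (TensorProduct.map f (LinearMap.rTensor P g))
        ((TensorProduct.assoc R M N P) (s ⊗ₜ z)) := by
  induction s using TensorProduct.induction_on with
  | zero => simp
  | tmul a b => simp
  | add a b ha hb => simp [add_tmul, ha, hb]

/-- inverse associator naturality, pointwise, with an opaque right pair -/
lemma assoc_symm_map_tmul (f : M →ₗ[R] M') (g : N →ₗ[R] N') (x : P) (s : M ⊗[R] N) :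
    (TensorProduct.assoc R P M' N').symm (x ⊗ₜ (TensorProduct.map f g) s) =
      (TensorProduct.map (LinearMap.lTensor P f) g)
        ((TensorProduct.assoc R P M N).symm (x ⊗ₜ s)) := by
  induction s using TensorProduct.induction_on with
  | zero => simp
  | tmul a b => simp
  | add a b ha hb => simp [tmul_add, ha, hb]

/-- `tensorTensorTensorComm` naturality, pointwise, with opaque pairs -/
lemma ttt_map_tmul (f : M →ₗ[R] M') (g : N →ₗ[R] N') (h : P →ₗ[R] P') (k : Q →ₗ[R] Q')
    (s : M ⊗[R] N) (t : P ⊗[R] Q) :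
    (TensorProduct.tensorTensorTensorComm R M' N' P' Q')
        ((TensorProduct.map f g) s ⊗ₜ (TensorProduct.map h k) t) =
      (TensorProduct.map (TensorProduct.map f h) (TensorProduct.map g k))
        ((TensorProduct.tensorTensorTensorComm R M N P Q) (s ⊗ₜ t)) := by
  induction s using TensorProduct.induction_on with
  | zero => simp
  | tmul a b =>
    induction t using TensorProduct.induction_on with
    | zero => simp
    | tmul c d => simp
    | add c d hc hd => simp only [map_tmul] at hc hd; simp [tmul_add, hc, hd]
  | add a b ha hb => simp [add_tmul, ha, hb]

end PointwiseNat

variable (E : ExtendingDatum R A H)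

lemma comulHH_tmul (x y : H) :
    (comulHH : H ⊗[R] H →ₗ[R] _) (x ⊗ₜ y) =
      TensorProduct.tensorTensorTensorComm R H H H H
        ((comul x) ⊗ₜ (comul y)) := by
  simp [comulHH]

lemma comulHA_tmul (x : H) (a : A) :
    (comulHA : H ⊗[R] A →ₗ[R] _) (x ⊗ₜ a) =
      TensorProduct.tensorTensorTensorComm R H H A A
        ((comul x) ⊗ₜ (comul a)) := by
  simp [comulHA]

lemma sigmaE_apply (v : H ⊗[R] H) :
    E.sigmaE v = TensorProduct.map E.tau E.mul (comulHH v) := rfl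

lemma psiE_apply (v : H ⊗[R] A) :
    E.psiE v = TensorProduct.map E.lact E.ract (comulHA v) := rfl

lemma comul_mul (hδ : E.ComulMultiplicative) (u : H ⊗[R] H) :
    (comul (E.mul u) : H ⊗[R] H) = TensorProduct.map E.mul E.mul (comulHH u) :=
  LinearMap.congr_fun hδ u

lemma comul_tau (u : H ⊗[R] H) :
    (comul (E.tau u) : A ⊗[R] A) = TensorProduct.map E.tau E.tau (comulHH u) :=
  (LinearMap.congr_fun E.tau_comul u).symm

lemma comul_ract (u : H ⊗[R] A) :
    (comul (E.ract u) : H ⊗[R] H) = TensorProduct.map E.ract E.ract (comulHA u) :=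
  (LinearMap.congr_fun E.ract_comul u).symm

end BEcocycle
namespace BEcocycle
open Coalgebra LinearMap

variable (R H) in
/-- shuffle used for `coassocW` (right-handed) -/
noncomputable def K1 : ((H ⊗[R] H) ⊗[R] H) ⊗[R] ((H ⊗[R] H) ⊗[R] H) →ₗ[R]
    (H ⊗[R] H) ⊗[R] ((H ⊗[R] H) ⊗[R] (H ⊗[R] H)) :=
  (TensorProduct.assoc R (H ⊗[R] H) (H ⊗[R] H) (H ⊗[R] H)).toLinearMap
    ∘ₗ LinearMap.rTensor (H ⊗[R] H)
        (TensorProduct.tensorTensorTensorComm R H H H H).toLinearMap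
    ∘ₗ (TensorProduct.tensorTensorTensorComm R (H ⊗[R] H) H (H ⊗[R] H) H).toLinearMap

variable (R H) in
/-- shuffle used for `coassocW` (left-handed) -/
noncomputable def K2 : (H ⊗[R] (H ⊗[R] H)) ⊗[R] (H ⊗[R] (H ⊗[R] H)) →ₗ[R]
    (H ⊗[R] H) ⊗[R] ((H ⊗[R] H) ⊗[R] (H ⊗[R] H)) :=
  LinearMap.lTensor (H ⊗[R] H)
      (TensorProduct.tensorTensorTensorComm R H H H H).toLinearMap
    ∘ₗ (TensorProduct.tensorTensorTensorComm R H (H ⊗[R] H) H (H ⊗[R] H)).toLinearMap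

lemma cK : (K1 R H) ∘ₗ TensorProduct.map
      (TensorProduct.assoc R H H H).symm.toLinearMap
      (TensorProduct.assoc R H H H).symm.toLinearMap = K2 R H := by
  ext x1 x2 x3 y1 y2 y3
  simp [K1, K2]

end BEcocycle
namespace BEcocycle
open Coalgebra LinearMap

lemma c1 (u w : H ⊗[R] H) :
    (TensorProduct.assoc R (H ⊗[R] H) (H ⊗[R] H) (H ⊗[R] H))
        (LinearMap.rTensor (H ⊗[R] H) (comulHH : H ⊗[R] H →ₗ[R] _)
          ((TensorProduct.tensorTensorTensorComm R H H H H) (u ⊗ₜ w))) =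
      K1 R H ((LinearMap.rTensor H (comul : H →ₗ[R] H ⊗[R] H) u) ⊗ₜ
        (LinearMap.rTensor H (comul : H →ₗ[R] H ⊗[R] H) w)) := by
  induction u using TensorProduct.induction_on with
  | zero => simp
  | tmul a b =>
    induction w using TensorProduct.induction_on with
    | zero => simp
    | tmul c d => simp [K1, comulHH_tmul]
    | add c d hc hd => simp only [tmul_add, map_add, hc, hd]
  | add a b ha hb => simp only [add_tmul, map_add, ha, hb]

lemma c2 (u w : H ⊗[R] H) :
    LinearMap.lTensor (H ⊗[R] H) (comulHH : H ⊗[R] H →ₗ[R] _)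
        ((TensorProduct.tensorTensorTensorComm R H H H H) (u ⊗ₜ w)) =
      K2 R H ((LinearMap.lTensor H (comul : H →ₗ[R] H ⊗[R] H) u) ⊗ₜ
        (LinearMap.lTensor H (comul : H →ₗ[R] H ⊗[R] H) w)) := by
  induction u using TensorProduct.induction_on with
  | zero => simp
  | tmul a b =>
    induction w using TensorProduct.induction_on with
    | zero => simp
    | tmul c d => simp [K2, comulHH_tmul]
    | add c d hc hd => simp only [tmul_add, map_add, hc, hd]
  | add a b ha hb => simp only [add_tmul, map_add, ha, hb]

/-- coassociativity of `comulHH`, pointwise -/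
lemma coassocW_pt (v : H ⊗[R] H) :
    (TensorProduct.assoc R (H ⊗[R] H) (H ⊗[R] H) (H ⊗[R] H))
        (LinearMap.rTensor (H ⊗[R] H) comulHH (comulHH v)) =
      LinearMap.lTensor (H ⊗[R] H) comulHH (comulHH v) := by
  induction v using TensorProduct.induction_on with
  | zero => simp
  | tmul x y =>
    rw [comulHH_tmul, c1, c2]
    have h := LinearMap.congr_fun (cK (R := R) (H := H))
      ((LinearMap.lTensor H comul (comul x)) ⊗ₜ (LinearMap.lTensor H comul (comul y)))
    simp only [LinearMap.comp_apply, TensorProduct.map_tmul, LinearEquiv.coe_coe,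
      Coalgebra.coassoc_symm_apply] at h
    exact h
  | add a b ha hb => simp only [map_add, ha, hb]

end BEcocycle
namespace BEcocycle
open Coalgebra LinearMap

variable (E : ExtendingDatum R A H)

/-- right-hand side of (BE5) -/
noncomputable def P1 : (H ⊗[R] H) ⊗[R] H →ₗ[R] A :=
  LinearMap.mul' R A ∘ₗ LinearMap.lTensor A E.tau
      ∘ₗ (TensorProduct.assoc R A H H).toLinearMap
      ∘ₗ LinearMap.rTensor H E.sigmaE

/-- left-hand side of (BE1) -/
noncomputable def Q1 : (H ⊗[R] H) ⊗[R] H →ₗ[R] H :=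
  E.mul ∘ₗ LinearMap.rTensor H E.mul

/-- left-hand side of (BE5) -/
noncomputable def P2 : (H ⊗[R] H) ⊗[R] H →ₗ[R] A :=
  LinearMap.mul' R A ∘ₗ LinearMap.lTensor A E.tau
      ∘ₗ (TensorProduct.assoc R A H H).toLinearMap
      ∘ₗ LinearMap.rTensor H E.psiE
      ∘ₗ (TensorProduct.assoc R H A H).symm.toLinearMap
      ∘ₗ LinearMap.lTensor H E.sigmaE
      ∘ₗ (TensorProduct.assoc R H H H).toLinearMap

/-- right-hand side of (BE1) -/
noncomputable def Q2 : (H ⊗[R] H) ⊗[R] H →ₗ[R] H :=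
  E.mul ∘ₗ LinearMap.rTensor H E.ract
      ∘ₗ (TensorProduct.assoc R H A H).symm.toLinearMap
      ∘ₗ LinearMap.lTensor H E.sigmaE
      ∘ₗ (TensorProduct.assoc R H H H).toLinearMap

lemma P2_eq_P1 (hBE5 : E.BE5) : P2 E = P1 E := hBE5

lemma Q1_eq_Q2 (hBE1 : E.BE1) : Q1 E = Q2 E := hBE1

/-- the collected form of the left-hand side of the cocycle condition -/
noncomputable def CL :
    ((H ⊗[R] H) ⊗[R] ((H ⊗[R] H) ⊗[R] (H ⊗[R] H))) ⊗[R] (H ⊗[R] H) →ₗ[R]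
      A ⊗[R] H :=
  TensorProduct.map (LinearMap.mul' R A) LinearMap.id
    ∘ₗ (TensorProduct.assoc R A A H).symm.toLinearMap
    ∘ₗ TensorProduct.map E.tau ((TensorProduct.map E.tau E.mul)
        ∘ₗ (TensorProduct.tensorTensorTensorComm R H H H H).toLinearMap)
    ∘ₗ (TensorProduct.assoc R (H ⊗[R] H) (H ⊗[R] H) (H ⊗[R] H)).toLinearMap
    ∘ₗ TensorProduct.map
        (LinearMap.lTensor (H ⊗[R] H) (TensorProduct.map E.mul E.mul))
        LinearMap.id

lemma sigma_mul_tmul (hδ : E.ComulMultiplicative) (u : H ⊗[R] H) (z : H) :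
    E.sigmaE (E.mul u ⊗ₜ z) = TensorProduct.map E.tau E.mul
      ((TensorProduct.tensorTensorTensorComm R H H H H)
        ((TensorProduct.map E.mul E.mul (comulHH u)) ⊗ₜ comul z)) := by
  rw [sigmaE_apply, comulHH_tmul, comul_mul E hδ]

lemma collectL (hδ : E.ComulMultiplicative) (v : H ⊗[R] H) (z : H) :
    cocycleLHS E.sigmaE (v ⊗ₜ z) =
      CL E ((LinearMap.lTensor (H ⊗[R] H) comulHH (comulHH v)) ⊗ₜ comul z) := by
  have main : ∀ t : (H ⊗[R] H) ⊗[R] (H ⊗[R] H),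
      TensorProduct.map (LinearMap.mul' R A) LinearMap.id
        ((TensorProduct.assoc R A A H).symm (LinearMap.lTensor A E.sigmaE
          ((TensorProduct.assoc R A H H)
            ((TensorProduct.map E.tau E.mul t) ⊗ₜ z)))) =
      CL E ((LinearMap.lTensor (H ⊗[R] H) comulHH t) ⊗ₜ comul z) := by
    intro t
    induction t using TensorProduct.induction_on with
    | zero => simp
    | tmul u₁ u₂ => simp [CL, sigma_mul_tmul E hδ]
    | add a b ha hb => simp only [map_add, add_tmul, ha, hb]
  have h0 : cocycleLHS E.sigmaE (v ⊗ₜ z) =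
      TensorProduct.map (LinearMap.mul' R A) LinearMap.id
        ((TensorProduct.assoc R A A H).symm (LinearMap.lTensor A E.sigmaE
          ((TensorProduct.assoc R A H H)
            ((TensorProduct.map E.tau E.mul (comulHH v)) ⊗ₜ z)))) := by
    simp [cocycleLHS, sigmaE_apply]
  rw [h0, main]

lemma collectPQ_L (t : (H ⊗[R] H) ⊗[R] (H ⊗[R] H)) (zz : H ⊗[R] H) :
    TensorProduct.map (P1 E) (Q1 E)
        ((TensorProduct.tensorTensorTensorComm R (H ⊗[R] H) (H ⊗[R] H) H H)
          (t ⊗ₜ zz)) =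
      CL E (((TensorProduct.assoc R (H ⊗[R] H) (H ⊗[R] H) (H ⊗[R] H))
        (LinearMap.rTensor (H ⊗[R] H) comulHH t)) ⊗ₜ zz) := by
  induction t using TensorProduct.induction_on with
  | zero => simp
  | tmul u₁ u₂ =>
    induction zz using TensorProduct.induction_on with
    | zero => simp
    | tmul z₁ z₂ =>
      have expand : TensorProduct.map (P1 E) (Q1 E)
          ((TensorProduct.tensorTensorTensorComm R (H ⊗[R] H) (H ⊗[R] H) H H)
            ((u₁ ⊗ₜ u₂) ⊗ₜ (z₁ ⊗ₜ z₂))) =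
          (LinearMap.mul' R A) (LinearMap.lTensor A E.tau
            ((TensorProduct.assoc R A H H)
              ((TensorProduct.map E.tau E.mul (comulHH u₁)) ⊗ₜ z₁))) ⊗ₜ
            (E.mul ((E.mul u₂) ⊗ₜ z₂)) := by
        simp [P1, Q1, sigmaE_apply]
      rw [expand]
      rw [show LinearMap.rTensor (H ⊗[R] H) (comulHH : H ⊗[R] H →ₗ[R] _)
          (u₁ ⊗ₜ u₂) = comulHH u₁ ⊗ₜ u₂ by simp]
      generalize (comulHH u₁ : (H ⊗[R] H) ⊗[R] (H ⊗[R] H)) = s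
      induction s using TensorProduct.induction_on with
      | zero => simp
      | tmul a b => simp [CL]
      | add c d hc hd => simp only [map_add, add_tmul, tmul_add, hc, hd]
    | add c d hc hd => simp only [tmul_add, map_add, hc, hd]
  | add a b ha hb => simp only [add_tmul, map_add, ha, hb]

end BEcocycle
namespace BEcocycle
open Coalgebra LinearMap

variable (E : ExtendingDatum R A H)

/-- `P2` precomposed with the inverse associator. -/
noncomputable def P2' : H ⊗[R] (H ⊗[R] H) →ₗ[R] A :=
  P2 E ∘ₗ (TensorProduct.assoc R H H H).symm.toLinearMap

/-- `Q2` precomposed with the inverse associator. -/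
noncomputable def Q2' : H ⊗[R] (H ⊗[R] H) →ₗ[R] H :=
  Q2 E ∘ₗ (TensorProduct.assoc R H H H).symm.toLinearMap

lemma r1 (gg uu ww : H ⊗[R] H) :
    TensorProduct.map (P2 E) (Q2 E)
        ((TensorProduct.tensorTensorTensorComm R (H ⊗[R] H) (H ⊗[R] H) H H)
          (((TensorProduct.tensorTensorTensorComm R H H H H) (gg ⊗ₜ uu)) ⊗ₜ ww)) =
      TensorProduct.map (P2' E) (Q2' E)
        ((TensorProduct.tensorTensorTensorComm R H H (H ⊗[R] H) (H ⊗[R] H))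
          (gg ⊗ₜ ((TensorProduct.tensorTensorTensorComm R H H H H) (uu ⊗ₜ ww)))) := by
  induction gg using TensorProduct.induction_on with
  | zero => simp
  | tmul g₁ g₂ =>
    induction uu using TensorProduct.induction_on with
    | zero => simp
    | tmul h₁ h₂ =>
      induction ww using TensorProduct.induction_on with
      | zero => simp
      | tmul l₁ l₂ => simp [P2', Q2']
      | add c d hc hd => simp only [tmul_add, map_add, hc, hd]
    | add c d hc hd => simp only [tmul_add, add_tmul, map_add, hc, hd]
  | add c d hc hd => simp only [add_tmul, map_add, hc, hd]

/-- collected form of `Q2'` -/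
noncomputable def CQ : H ⊗[R] ((H ⊗[R] H) ⊗[R] (H ⊗[R] H)) →ₗ[R] H :=
  E.mul ∘ₗ TensorProduct.map (E.ract ∘ₗ LinearMap.lTensor H E.tau) E.mul
    ∘ₗ (TensorProduct.assoc R H (H ⊗[R] H) (H ⊗[R] H)).symm.toLinearMap

lemma cq (x : H) (u : H ⊗[R] H) :
    Q2' E (x ⊗ₜ u) = CQ E (x ⊗ₜ comulHH u) := by
  have h0 : Q2' E (x ⊗ₜ u) =
      E.mul (LinearMap.rTensor H E.ract
        ((TensorProduct.assoc R H A H).symm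
          (x ⊗ₜ (TensorProduct.map E.tau E.mul (comulHH u))))) := by
    simp [Q2', Q2, sigmaE_apply]
  rw [h0]
  generalize (comulHH u : (H ⊗[R] H) ⊗[R] (H ⊗[R] H)) = s
  induction s using TensorProduct.induction_on with
  | zero => simp
  | tmul s₁ s₂ => simp [CQ]
  | add c d hc hd => simp only [tmul_add, map_add, hc, hd]

/-- collected form of `P2'` -/
noncomputable def CP : (H ⊗[R] H) ⊗[R]
    (((H ⊗[R] H) ⊗[R] (H ⊗[R] H)) ⊗[R] (H ⊗[R] H)) →ₗ[R] A :=
  LinearMap.mul' R A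
    ∘ₗ TensorProduct.map E.lact (E.tau ∘ₗ TensorProduct.map E.ract LinearMap.id)
    ∘ₗ (TensorProduct.assoc R (H ⊗[R] A) (H ⊗[R] A) H).toLinearMap
    ∘ₗ LinearMap.rTensor H
        (TensorProduct.tensorTensorTensorComm R H H A A).toLinearMap
    ∘ₗ (TensorProduct.assoc R (H ⊗[R] H) (A ⊗[R] A) H).symm.toLinearMap
    ∘ₗ LinearMap.lTensor (H ⊗[R] H)
        (TensorProduct.map (TensorProduct.map E.tau E.tau) E.mul)

lemma cp (x : H) (u : H ⊗[R] H) :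
    P2' E (x ⊗ₜ u) = CP E ((comul x) ⊗ₜ
      (LinearMap.rTensor (H ⊗[R] H) comulHH (comulHH u))) := by
  have h0 : P2' E (x ⊗ₜ u) =
      (LinearMap.mul' R A) (LinearMap.lTensor A E.tau
        ((TensorProduct.assoc R A H H) (LinearMap.rTensor H E.psiE
          ((TensorProduct.assoc R H A H).symm
            (x ⊗ₜ (TensorProduct.map E.tau E.mul (comulHH u))))))) := by
    simp [P2', P2, sigmaE_apply]
  rw [h0]
  generalize (comulHH u : (H ⊗[R] H) ⊗[R] (H ⊗[R] H)) = s
  induction s using TensorProduct.induction_on with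
  | zero => simp
  | tmul s₁ s₂ =>
    have hpsi : E.psiE (x ⊗ₜ E.tau s₁) = TensorProduct.map E.lact E.ract
        ((TensorProduct.tensorTensorTensorComm R H H A A)
          ((comul x) ⊗ₜ (TensorProduct.map E.tau E.tau (comulHH s₁)))) := by
      rw [psiE_apply, comulHA_tmul, comul_tau]
    have h1 : LinearMap.rTensor (H ⊗[R] H) (comulHH : H ⊗[R] H →ₗ[R] _)
        (s₁ ⊗ₜ s₂) = comulHH s₁ ⊗ₜ s₂ := by simp
    rw [h1]
    have h2 : (TensorProduct.assoc R H A H).symm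
        (x ⊗ₜ (TensorProduct.map E.tau E.mul (s₁ ⊗ₜ s₂))) =
        (x ⊗ₜ E.tau s₁) ⊗ₜ E.mul s₂ := by simp
    rw [h2]
    have h3 : LinearMap.rTensor H E.psiE ((x ⊗ₜ E.tau s₁) ⊗ₜ E.mul s₂) =
        (E.psiE (x ⊗ₜ E.tau s₁)) ⊗ₜ E.mul s₂ := by simp
    rw [h3, hpsi]
    generalize (comul x : H ⊗[R] H) = xx
    generalize (comulHH s₁ : (H ⊗[R] H) ⊗[R] (H ⊗[R] H)) = ss
    induction xx using TensorProduct.induction_on with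
    | zero => simp
    | tmul x₁ x₂ =>
      induction ss using TensorProduct.induction_on with
      | zero => simp
      | tmul a b => simp [CP]
      | add c d hc hd => simp only [tmul_add, add_tmul, map_add, hc, hd]
    | add c d hc hd => simp only [tmul_add, add_tmul, map_add, hc, hd]
  | add c d hc hd => simp only [tmul_add, map_add, hc, hd]

end BEcocycle
namespace BEcocycle
open Coalgebra LinearMap

variable (E : ExtendingDatum R A H)

/-- interleaving shuffle used in `CR` -/
noncomputable def ZR : (H ⊗[R] (H ⊗[R] H)) ⊗[R] (A ⊗[R] (A ⊗[R] A)) →ₗ[R]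
    A ⊗[R] (H ⊗[R] H) :=
  TensorProduct.map E.lact (TensorProduct.map E.ract E.ract)
    ∘ₗ LinearMap.lTensor (H ⊗[R] A)
        (TensorProduct.tensorTensorTensorComm R H H A A).toLinearMap
    ∘ₗ (TensorProduct.tensorTensorTensorComm R H (H ⊗[R] H) A (A ⊗[R] A)).toLinearMap

/-- evaluator for the raw form of the right-hand side -/
noncomputable def CR : (H ⊗[R] (H ⊗[R] H)) ⊗[R]
    (((H ⊗[R] H) ⊗[R] ((H ⊗[R] H) ⊗[R] (H ⊗[R] H))) ⊗[R]
      ((H ⊗[R] H) ⊗[R] (H ⊗[R] H))) →ₗ[R] A ⊗[R] H :=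
  TensorProduct.map (LinearMap.mul' R A) LinearMap.id
    ∘ₗ (TensorProduct.assoc R A A H).symm.toLinearMap
    ∘ₗ LinearMap.lTensor A (TensorProduct.map E.tau E.mul)
    ∘ₗ LinearMap.lTensor A
        (TensorProduct.tensorTensorTensorComm R H H H H).toLinearMap
    ∘ₗ (TensorProduct.assoc R A (H ⊗[R] H) (H ⊗[R] H)).toLinearMap
    ∘ₗ LinearMap.rTensor (H ⊗[R] H) (ZR E)
    ∘ₗ (TensorProduct.assoc R (H ⊗[R] (H ⊗[R] H)) (A ⊗[R] (A ⊗[R] A))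
        (H ⊗[R] H)).symm.toLinearMap
    ∘ₗ LinearMap.lTensor (H ⊗[R] (H ⊗[R] H))
        (TensorProduct.map
          (TensorProduct.map E.tau (TensorProduct.map E.tau E.tau))
          (TensorProduct.map E.mul E.mul))

lemma sigma_ract_mul (hδ : E.ComulMultiplicative) (p : H ⊗[R] A) (u : H ⊗[R] H) :
    E.sigmaE ((E.ract p) ⊗ₜ (E.mul u)) =
      TensorProduct.map E.tau E.mul
        ((TensorProduct.tensorTensorTensorComm R H H H H)
          ((TensorProduct.map E.ract E.ract (comulHA p)) ⊗ₜ
            (TensorProduct.map E.mul E.mul (comulHH u)))) := by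
  rw [sigmaE_apply, comulHH_tmul, comul_ract, comul_mul E hδ]

lemma r5 (hδ : E.ComulMultiplicative) (g : H) (w : H ⊗[R] H) :
    cocycleRHS E.psiE E.sigmaE (g ⊗ₜ w) =
      CR E ((LinearMap.lTensor H (comul : H →ₗ[R] H ⊗[R] H) (comul g)) ⊗ₜ
        ((TensorProduct.map
            (LinearMap.lTensor (H ⊗[R] H) comulHH ∘ₗ comulHH) comulHH)
          (comulHH w))) := by
  have h0 : cocycleRHS E.psiE E.sigmaE (g ⊗ₜ w) =
      TensorProduct.map (LinearMap.mul' R A) LinearMap.id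
        ((TensorProduct.assoc R A A H).symm (LinearMap.lTensor A E.sigmaE
          ((TensorProduct.assoc R A H H) (LinearMap.rTensor H E.psiE
            ((TensorProduct.assoc R H A H).symm
              (g ⊗ₜ (TensorProduct.map E.tau E.mul (comulHH w)))))))) := by
    simp [cocycleRHS, sigmaE_apply]
  rw [h0]
  generalize (comulHH w : (H ⊗[R] H) ⊗[R] (H ⊗[R] H)) = s
  induction s using TensorProduct.induction_on with
  | zero => simp
  | tmul s₁ s₂ =>
    have hpsi : E.psiE (g ⊗ₜ E.tau s₁) = TensorProduct.map E.lact E.ract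
        ((TensorProduct.tensorTensorTensorComm R H H A A)
          ((comul g) ⊗ₜ (TensorProduct.map E.tau E.tau (comulHH s₁)))) := by
      rw [psiE_apply, comulHA_tmul, comul_tau]
    have h1 : (TensorProduct.map
          (LinearMap.lTensor (H ⊗[R] H) comulHH ∘ₗ comulHH) comulHH)
          (s₁ ⊗ₜ s₂) =
        (LinearMap.lTensor (H ⊗[R] H) comulHH (comulHH s₁)) ⊗ₜ comulHH s₂ := by
      simp
    have h2 : (TensorProduct.assoc R H A H).symm
        (g ⊗ₜ (TensorProduct.map E.tau E.mul (s₁ ⊗ₜ s₂))) =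
        (g ⊗ₜ E.tau s₁) ⊗ₜ E.mul s₂ := by simp
    rw [h1, h2]
    have h3 : LinearMap.rTensor H E.psiE ((g ⊗ₜ E.tau s₁) ⊗ₜ E.mul s₂) =
        (E.psiE (g ⊗ₜ E.tau s₁)) ⊗ₜ E.mul s₂ := by simp
    rw [h3, hpsi]
    generalize (comul g : H ⊗[R] H) = xx
    generalize (comulHH s₁ : (H ⊗[R] H) ⊗[R] (H ⊗[R] H)) = ss
    induction xx using TensorProduct.induction_on with
    | zero => simp
    | tmul x₁ x₂ =>
      induction ss using TensorProduct.induction_on with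
      | zero => simp
      | tmul a b =>
        have h4 : (TensorProduct.tensorTensorTensorComm R H H A A)
            ((x₁ ⊗ₜ x₂) ⊗ₜ (TensorProduct.map E.tau E.tau (a ⊗ₜ b))) =
            (x₁ ⊗ₜ E.tau a) ⊗ₜ (x₂ ⊗ₜ E.tau b) := by simp
        rw [h4]
        have h5 : (TensorProduct.assoc R A H H)
            ((TensorProduct.map E.lact E.ract
              ((x₁ ⊗ₜ E.tau a) ⊗ₜ (x₂ ⊗ₜ E.tau b))) ⊗ₜ E.mul s₂) =
            E.lact (x₁ ⊗ₜ E.tau a) ⊗ₜ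
              ((E.ract (x₂ ⊗ₜ E.tau b)) ⊗ₜ E.mul s₂) := by simp
        rw [h5]
        have h6 : LinearMap.lTensor A E.sigmaE
            (E.lact (x₁ ⊗ₜ E.tau a) ⊗ₜ ((E.ract (x₂ ⊗ₜ E.tau b)) ⊗ₜ E.mul s₂)) =
            E.lact (x₁ ⊗ₜ E.tau a) ⊗ₜ
              E.sigmaE ((E.ract (x₂ ⊗ₜ E.tau b)) ⊗ₜ E.mul s₂) := by simp
        rw [h6, sigma_ract_mul E hδ, comulHA_tmul, comul_tau]
        simp [CR, ZR]
      | add c d hc hd => simp only [tmul_add, add_tmul, map_add, hc, hd]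
    | add c d hc hd => simp only [tmul_add, add_tmul, map_add, hc, hd]
  | add c d hc hd => simp only [tmul_add, map_add, hc, hd]

end BEcocycle
namespace BEcocycle
open Coalgebra LinearMap

variable (E : ExtendingDatum R A H)

/-- `γ`-shuffle for `ZM` -/
noncomputable def gammaM : (H ⊗[R] H) ⊗[R] A →ₗ[R] (H ⊗[R] A) ⊗[R] H :=
  (TensorProduct.assoc R H A H).symm.toLinearMap
    ∘ₗ LinearMap.lTensor H (TensorProduct.comm R H A).toLinearMap
    ∘ₗ (TensorProduct.assoc R H H A).toLinearMap

/-- interleaving shuffle for `CM` -/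
noncomputable def ZM : (H ⊗[R] (H ⊗[R] H)) ⊗[R] (A ⊗[R] A) →ₗ[R]
    A ⊗[R] (H ⊗[R] H) :=
  TensorProduct.map E.lact (TensorProduct.map E.ract LinearMap.id)
    ∘ₗ LinearMap.lTensor (H ⊗[R] A) (gammaM)
    ∘ₗ (TensorProduct.tensorTensorTensorComm R H (H ⊗[R] H) A A).toLinearMap

/-- inner assembly for `CM` -/
noncomputable def IM : (H ⊗[R] H) ⊗[R] ((H ⊗[R] A) ⊗[R] H) →ₗ[R] A ⊗[R] H :=
  TensorProduct.map E.tau (E.mul ∘ₗ TensorProduct.map E.ract LinearMap.id)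
    ∘ₗ (TensorProduct.assoc R (H ⊗[R] H) (H ⊗[R] A) H).toLinearMap
    ∘ₗ LinearMap.rTensor H
        (TensorProduct.tensorTensorTensorComm R H H H A).toLinearMap
    ∘ₗ (TensorProduct.assoc R (H ⊗[R] H) (H ⊗[R] A) H).symm.toLinearMap

/-- evaluator for the middle (BE7-decorated) form -/
noncomputable def CM : (H ⊗[R] (H ⊗[R] H)) ⊗[R]
    (((H ⊗[R] H) ⊗[R] (H ⊗[R] H)) ⊗[R]
      ((H ⊗[R] A) ⊗[R] (H ⊗[R] H))) →ₗ[R] A ⊗[R] H :=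
  TensorProduct.map (LinearMap.mul' R A) LinearMap.id
    ∘ₗ (TensorProduct.assoc R A A H).symm.toLinearMap
    ∘ₗ LinearMap.lTensor A (IM E)
    ∘ₗ (TensorProduct.assoc R A (H ⊗[R] H) ((H ⊗[R] A) ⊗[R] H)).toLinearMap
    ∘ₗ LinearMap.rTensor ((H ⊗[R] A) ⊗[R] H) (ZM E)
    ∘ₗ (TensorProduct.assoc R (H ⊗[R] (H ⊗[R] H)) (A ⊗[R] A)
        ((H ⊗[R] A) ⊗[R] H)).symm.toLinearMap
    ∘ₗ LinearMap.lTensor (H ⊗[R] (H ⊗[R] H))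
        (TensorProduct.map (TensorProduct.map E.tau E.tau)
          (TensorProduct.map LinearMap.id E.mul))

/-- raw-slotted evaluator at stage 1 -/
noncomputable def CE1 : (H ⊗[R] (H ⊗[R] H)) ⊗[R]
    ((((H ⊗[R] H) ⊗[R] (H ⊗[R] H)) ⊗[R] (H ⊗[R] H)) ⊗[R]
      ((H ⊗[R] H) ⊗[R] (H ⊗[R] H))) →ₗ[R] A ⊗[R] H :=
  CR E ∘ₗ LinearMap.lTensor (H ⊗[R] (H ⊗[R] H))
    (TensorProduct.map
      (TensorProduct.assoc R (H ⊗[R] H) (H ⊗[R] H) (H ⊗[R] H)).toLinearMap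
      LinearMap.id)

/-- re-association `T2 → T0` -/
noncomputable def zeta2 : ((H ⊗[R] H) ⊗[R] (H ⊗[R] H)) ⊗[R]
    ((H ⊗[R] H) ⊗[R] ((H ⊗[R] H) ⊗[R] (H ⊗[R] H))) →ₗ[R]
    ((H ⊗[R] H) ⊗[R] ((H ⊗[R] H) ⊗[R] (H ⊗[R] H))) ⊗[R]
      ((H ⊗[R] H) ⊗[R] (H ⊗[R] H)) :=
  (TensorProduct.assoc R (H ⊗[R] H) ((H ⊗[R] H) ⊗[R] (H ⊗[R] H))
      ((H ⊗[R] H) ⊗[R] (H ⊗[R] H))).symm.toLinearMap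
    ∘ₗ LinearMap.lTensor (H ⊗[R] H)
        (TensorProduct.assoc R (H ⊗[R] H) (H ⊗[R] H)
          ((H ⊗[R] H) ⊗[R] (H ⊗[R] H))).symm.toLinearMap
    ∘ₗ (TensorProduct.assoc R (H ⊗[R] H) (H ⊗[R] H)
        ((H ⊗[R] H) ⊗[R] ((H ⊗[R] H) ⊗[R] (H ⊗[R] H)))).toLinearMap

/-- raw-slotted evaluator at stage 2 -/
noncomputable def CE2 : (H ⊗[R] (H ⊗[R] H)) ⊗[R]
    (((H ⊗[R] H) ⊗[R] (H ⊗[R] H)) ⊗[R]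
      ((H ⊗[R] H) ⊗[R] ((H ⊗[R] H) ⊗[R] (H ⊗[R] H)))) →ₗ[R] A ⊗[R] H :=
  CR E ∘ₗ LinearMap.lTensor (H ⊗[R] (H ⊗[R] H)) (zeta2)

/-- raw-slotted evaluator at stage 3 -/
noncomputable def CE3 : (H ⊗[R] (H ⊗[R] H)) ⊗[R]
    (((H ⊗[R] H) ⊗[R] (H ⊗[R] H)) ⊗[R]
      (((H ⊗[R] H) ⊗[R] (H ⊗[R] H)) ⊗[R] (H ⊗[R] H))) →ₗ[R] A ⊗[R] H :=
  CM E ∘ₗ LinearMap.lTensor (H ⊗[R] (H ⊗[R] H))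
    (LinearMap.lTensor ((H ⊗[R] H) ⊗[R] (H ⊗[R] H))
      (LinearMap.rTensor (H ⊗[R] H)
        ((TensorProduct.comm R A H).toLinearMap
          ∘ₗ TensorProduct.map E.tau E.mul)))

/-- PQ-slotted evaluator at stage 3 -/
noncomputable def CE3' : (H ⊗[R] (H ⊗[R] H)) ⊗[R]
    (((H ⊗[R] H) ⊗[R] (H ⊗[R] H)) ⊗[R]
      (((H ⊗[R] H) ⊗[R] (H ⊗[R] H)) ⊗[R] (H ⊗[R] H))) →ₗ[R] A ⊗[R] H :=
  CM E ∘ₗ LinearMap.lTensor (H ⊗[R] (H ⊗[R] H))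
    (LinearMap.lTensor ((H ⊗[R] H) ⊗[R] (H ⊗[R] H))
      (LinearMap.rTensor (H ⊗[R] H) (TensorProduct.map E.mul E.tau)))

/-- PQ evaluator at stage 1 -/
noncomputable def CN1 : ((H ⊗[R] H) ⊗[R] H) ⊗[R]
    ((((H ⊗[R] H) ⊗[R] (H ⊗[R] H)) ⊗[R] (H ⊗[R] H)) ⊗[R]
      ((H ⊗[R] H) ⊗[R] (H ⊗[R] H))) →ₗ[R] A ⊗[R] H :=
  TensorProduct.map (CP E) (CQ E)
    ∘ₗ (TensorProduct.tensorTensorTensorComm R (H ⊗[R] H) H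
        (((H ⊗[R] H) ⊗[R] (H ⊗[R] H)) ⊗[R] (H ⊗[R] H))
        ((H ⊗[R] H) ⊗[R] (H ⊗[R] H))).toLinearMap

/-- PQ evaluator at stage 1, with `X`-shape `H ⊗ (H ⊗ H)` -/
noncomputable def CN1' : (H ⊗[R] (H ⊗[R] H)) ⊗[R]
    ((((H ⊗[R] H) ⊗[R] (H ⊗[R] H)) ⊗[R] (H ⊗[R] H)) ⊗[R]
      ((H ⊗[R] H) ⊗[R] (H ⊗[R] H))) →ₗ[R] A ⊗[R] H :=
  CN1 E ∘ₗ LinearMap.rTensor _ (TensorProduct.assoc R H H H).symm.toLinearMap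

/-- PQ evaluator at stage 2 -/
noncomputable def CE2' : (H ⊗[R] (H ⊗[R] H)) ⊗[R]
    (((H ⊗[R] H) ⊗[R] (H ⊗[R] H)) ⊗[R]
      ((H ⊗[R] H) ⊗[R] ((H ⊗[R] H) ⊗[R] (H ⊗[R] H)))) →ₗ[R] A ⊗[R] H :=
  CN1' E ∘ₗ LinearMap.lTensor (H ⊗[R] (H ⊗[R] H))
    (TensorProduct.assoc R ((H ⊗[R] H) ⊗[R] (H ⊗[R] H)) (H ⊗[R] H)
      ((H ⊗[R] H) ⊗[R] (H ⊗[R] H))).symm.toLinearMap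

end BEcocycle
namespace BEcocycle
open Coalgebra LinearMap

variable (E : ExtendingDatum R A H)

lemma ceq01 (X : H ⊗[R] (H ⊗[R] H))
    (S' : ((H ⊗[R] H) ⊗[R] (H ⊗[R] H)) ⊗[R] (H ⊗[R] H))
    (T : (H ⊗[R] H) ⊗[R] (H ⊗[R] H)) :
    CR E (X ⊗ₜ
        (((TensorProduct.assoc R (H ⊗[R] H) (H ⊗[R] H) (H ⊗[R] H)) S') ⊗ₜ T)) =
      CE1 E (X ⊗ₜ (S' ⊗ₜ T)) := by
  simp [CE1]

lemma r6 (X : H ⊗[R] (H ⊗[R] H)) (s : (H ⊗[R] H) ⊗[R] (H ⊗[R] H)) :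
    CR E (X ⊗ₜ ((TensorProduct.map
        (LinearMap.lTensor (H ⊗[R] H) comulHH ∘ₗ comulHH) comulHH) s)) =
      CE1 E (X ⊗ₜ ((TensorProduct.map
        (LinearMap.rTensor (H ⊗[R] H) comulHH ∘ₗ comulHH) comulHH) s)) := by
  induction s using TensorProduct.induction_on with
  | zero => simp
  | tmul s₁ s₂ =>
    simp only [TensorProduct.map_tmul, LinearMap.comp_apply]
    rw [← coassocW_pt s₁, ceq01]
  | add c d hc hd => simp only [map_add, tmul_add, hc, hd]

lemma ceq12 (X : H ⊗[R] (H ⊗[R] H)) (S : (H ⊗[R] H) ⊗[R] (H ⊗[R] H))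
    (c : H ⊗[R] H) (T : (H ⊗[R] H) ⊗[R] (H ⊗[R] H)) :
    CE1 E (X ⊗ₜ ((S ⊗ₜ c) ⊗ₜ T)) = CE2 E (X ⊗ₜ (S ⊗ₜ (c ⊗ₜ T))) := by
  induction S using TensorProduct.induction_on with
  | zero => simp
  | tmul a b => simp [CE1, CE2, zeta2]
  | add u v hu hv => simp only [add_tmul, tmul_add, map_add, hu, hv]

lemma r7 (X : H ⊗[R] (H ⊗[R] H)) (w : H ⊗[R] H) :
    CE1 E (X ⊗ₜ ((TensorProduct.map
        (LinearMap.rTensor (H ⊗[R] H) comulHH ∘ₗ comulHH) comulHH)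
          (comulHH w))) =
      CE2 E (X ⊗ₜ ((TensorProduct.map comulHH
        (LinearMap.lTensor (H ⊗[R] H) comulHH ∘ₗ comulHH)) (comulHH w))) := by
  have e1 : ∀ t : (H ⊗[R] H) ⊗[R] (H ⊗[R] H),
      (TensorProduct.map (LinearMap.rTensor (H ⊗[R] H) comulHH ∘ₗ comulHH)
        comulHH) t =
      (TensorProduct.map (LinearMap.rTensor (H ⊗[R] H) comulHH) comulHH)
        (LinearMap.rTensor (H ⊗[R] H) comulHH t) := by
    intro t
    induction t using TensorProduct.induction_on with
    | zero => simp
    | tmul a b => simp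
    | add u v hu hv => simp only [map_add, hu, hv]
  have e2 : ∀ t : (H ⊗[R] H) ⊗[R] (H ⊗[R] H),
      (TensorProduct.map comulHH
        (LinearMap.lTensor (H ⊗[R] H) comulHH ∘ₗ comulHH)) t =
      (TensorProduct.map comulHH (LinearMap.lTensor (H ⊗[R] H) comulHH))
        (LinearMap.lTensor (H ⊗[R] H) comulHH t) := by
    intro t
    induction t using TensorProduct.induction_on with
    | zero => simp
    | tmul a b => simp
    | add u v hu hv => simp only [map_add, hu, hv]
  have hY : LinearMap.rTensor (H ⊗[R] H) comulHH (comulHH w) =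
      (TensorProduct.assoc R (H ⊗[R] H) (H ⊗[R] H) (H ⊗[R] H)).symm
        (LinearMap.lTensor (H ⊗[R] H) comulHH (comulHH w)) := by
    rw [← coassocW_pt w, LinearEquiv.symm_apply_apply]
  rw [e1, e2, hY]
  generalize (LinearMap.lTensor (H ⊗[R] H) comulHH (comulHH w) :
    (H ⊗[R] H) ⊗[R] ((H ⊗[R] H) ⊗[R] (H ⊗[R] H))) = Y
  induction Y using TensorProduct.induction_on with
  | zero => simp
  | tmul w₁ yy =>
    induction yy using TensorProduct.induction_on with
    | zero => simp
    | tmul w₂ w₃ =>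
      have h1 : (TensorProduct.assoc R (H ⊗[R] H) (H ⊗[R] H)
          (H ⊗[R] H)).symm (w₁ ⊗ₜ (w₂ ⊗ₜ w₃)) = (w₁ ⊗ₜ w₂) ⊗ₜ w₃ := by simp
      rw [h1]
      simp only [TensorProduct.map_tmul, LinearMap.rTensor_tmul,
        LinearMap.lTensor_tmul]
      exact ceq12 E X (comulHH w₁) w₂ (comulHH w₃)
    | add u v hu hv => simp only [map_add, tmul_add, hu, hv]
  | add u v hu hv => simp only [map_add, tmul_add, hu, hv]

lemma ceq23 (X : H ⊗[R] (H ⊗[R] H)) (S : (H ⊗[R] H) ⊗[R] (H ⊗[R] H))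
    (Y : ((H ⊗[R] H) ⊗[R] (H ⊗[R] H)) ⊗[R] (H ⊗[R] H)) :
    CE2 E (X ⊗ₜ (S ⊗ₜ
        ((TensorProduct.assoc R (H ⊗[R] H) (H ⊗[R] H) (H ⊗[R] H)) Y))) =
      CE3 E (X ⊗ₜ (S ⊗ₜ Y)) := by
  induction X using TensorProduct.induction_on with
  | zero => simp
  | tmul x₁ xx =>
    induction xx using TensorProduct.induction_on with
    | zero => simp
    | tmul x₂ x₃ =>
      induction S using TensorProduct.induction_on with
      | zero => simp
      | tmul a b =>
        induction Y using TensorProduct.induction_on with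
        | zero => simp
        | tmul cd e =>
          induction cd using TensorProduct.induction_on with
          | zero => simp
          | tmul c d =>
            simp [CE2, CE3, CM, CR, zeta2, ZM, ZR, IM, gammaM]
          | add u v hu hv => simp only [add_tmul, tmul_add, map_add, hu, hv]
        | add u v hu hv => simp only [add_tmul, tmul_add, map_add, hu, hv]
      | add u v hu hv => simp only [add_tmul, tmul_add, map_add, hu, hv]
    | add u v hu hv => simp only [add_tmul, tmul_add, map_add, hu, hv]
  | add u v hu hv => simp only [add_tmul, tmul_add, map_add, hu, hv]

lemma r8 (X : H ⊗[R] (H ⊗[R] H)) (s : (H ⊗[R] H) ⊗[R] (H ⊗[R] H)) :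
    CE2 E (X ⊗ₜ ((TensorProduct.map comulHH
        (LinearMap.lTensor (H ⊗[R] H) comulHH ∘ₗ comulHH)) s)) =
      CE3 E (X ⊗ₜ ((TensorProduct.map comulHH
        (LinearMap.rTensor (H ⊗[R] H) comulHH ∘ₗ comulHH)) s)) := by
  induction s using TensorProduct.induction_on with
  | zero => simp
  | tmul P Q =>
    simp only [TensorProduct.map_tmul, LinearMap.comp_apply]
    rw [← coassocW_pt Q, ceq23]
  | add c d hc hd => simp only [map_add, tmul_add, hc, hd]

lemma r9 (X : H ⊗[R] (H ⊗[R] H)) (s : (H ⊗[R] H) ⊗[R] (H ⊗[R] H)) :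
    CE3 E (X ⊗ₜ ((TensorProduct.map comulHH
        (LinearMap.rTensor (H ⊗[R] H) comulHH ∘ₗ comulHH)) s)) =
      CM E (X ⊗ₜ ((TensorProduct.map comulHH
        (LinearMap.rTensor (H ⊗[R] H)
          ((TensorProduct.comm R A H).toLinearMap ∘ₗ E.sigmaE)
            ∘ₗ comulHH)) s)) := by
  have key : ∀ q : (H ⊗[R] H) ⊗[R] (H ⊗[R] H),
      LinearMap.rTensor (H ⊗[R] H)
          ((TensorProduct.comm R A H).toLinearMap
            ∘ₗ TensorProduct.map E.tau E.mul)
          (LinearMap.rTensor (H ⊗[R] H) comulHH q) =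
      LinearMap.rTensor (H ⊗[R] H)
          ((TensorProduct.comm R A H).toLinearMap ∘ₗ E.sigmaE) q := by
    intro q
    rw [← LinearMap.comp_apply, ← LinearMap.rTensor_comp]
    congr 1
  induction s using TensorProduct.induction_on with
  | zero => simp
  | tmul P Q =>
    simp only [TensorProduct.map_tmul, LinearMap.comp_apply, CE3,
      LinearMap.lTensor_tmul]
    rw [key]
  | add c d hc hd => simp only [map_add, tmul_add, hc, hd]

end BEcocycle
namespace BEcocycle
open Coalgebra LinearMap

variable (E : ExtendingDatum R A H)

lemma r4 (gg : H ⊗[R] H) (t : (H ⊗[R] H) ⊗[R] (H ⊗[R] H)) :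
    TensorProduct.map (P2' E) (Q2' E)
        ((TensorProduct.tensorTensorTensorComm R H H (H ⊗[R] H) (H ⊗[R] H))
          (gg ⊗ₜ t)) =
      TensorProduct.map (CP E) (CQ E)
        ((TensorProduct.tensorTensorTensorComm R (H ⊗[R] H) H
            (((H ⊗[R] H) ⊗[R] (H ⊗[R] H)) ⊗[R] (H ⊗[R] H))
            ((H ⊗[R] H) ⊗[R] (H ⊗[R] H)))
          ((LinearMap.rTensor H (comul : H →ₗ[R] H ⊗[R] H) gg) ⊗ₜ
            ((TensorProduct.map
              (LinearMap.rTensor (H ⊗[R] H) comulHH ∘ₗ comulHH) comulHH)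
              t))) := by
  induction gg using TensorProduct.induction_on with
  | zero => simp
  | tmul g₁ g₂ =>
    induction t using TensorProduct.induction_on with
    | zero => simp
    | tmul u u' =>
      simp only [TensorProduct.tensorTensorTensorComm_tmul,
        TensorProduct.map_tmul, LinearMap.rTensor_tmul, LinearMap.comp_apply]
      rw [cp, cq]
    | add c d hc hd => simp only [tmul_add, map_add, hc, hd]
  | add c d hc hd => simp only [add_tmul, map_add, hc, hd]

lemma cn1'_glue (Y : (H ⊗[R] H) ⊗[R] H)
    (t : (((H ⊗[R] H) ⊗[R] (H ⊗[R] H)) ⊗[R] (H ⊗[R] H)) ⊗[R]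
      ((H ⊗[R] H) ⊗[R] (H ⊗[R] H))) :
    CN1' E (((TensorProduct.assoc R H H H) Y) ⊗ₜ t) = CN1 E (Y ⊗ₜ t) := by
  simp [CN1']

lemma ceq12' (X : H ⊗[R] (H ⊗[R] H)) (S : (H ⊗[R] H) ⊗[R] (H ⊗[R] H))
    (c : H ⊗[R] H) (T : (H ⊗[R] H) ⊗[R] (H ⊗[R] H)) :
    CN1' E (X ⊗ₜ ((S ⊗ₜ c) ⊗ₜ T)) = CE2' E (X ⊗ₜ (S ⊗ₜ (c ⊗ₜ T))) := by
  simp [CE2']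

lemma r7' (X : H ⊗[R] (H ⊗[R] H)) (w : H ⊗[R] H) :
    CN1' E (X ⊗ₜ ((TensorProduct.map
        (LinearMap.rTensor (H ⊗[R] H) comulHH ∘ₗ comulHH) comulHH)
          (comulHH w))) =
      CE2' E (X ⊗ₜ ((TensorProduct.map comulHH
        (LinearMap.lTensor (H ⊗[R] H) comulHH ∘ₗ comulHH)) (comulHH w))) := by
  have e1 : ∀ t : (H ⊗[R] H) ⊗[R] (H ⊗[R] H),
      (TensorProduct.map (LinearMap.rTensor (H ⊗[R] H) comulHH ∘ₗ comulHH)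
        comulHH) t =
      (TensorProduct.map (LinearMap.rTensor (H ⊗[R] H) comulHH) comulHH)
        (LinearMap.rTensor (H ⊗[R] H) comulHH t) := by
    intro t
    induction t using TensorProduct.induction_on with
    | zero => simp
    | tmul a b => simp
    | add u v hu hv => simp only [map_add, hu, hv]
  have e2 : ∀ t : (H ⊗[R] H) ⊗[R] (H ⊗[R] H),
      (TensorProduct.map comulHH
        (LinearMap.lTensor (H ⊗[R] H) comulHH ∘ₗ comulHH)) t =
      (TensorProduct.map comulHH (LinearMap.lTensor (H ⊗[R] H) comulHH))
        (LinearMap.lTensor (H ⊗[R] H) comulHH t) := by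
    intro t
    induction t using TensorProduct.induction_on with
    | zero => simp
    | tmul a b => simp
    | add u v hu hv => simp only [map_add, hu, hv]
  have hY : LinearMap.rTensor (H ⊗[R] H) comulHH (comulHH w) =
      (TensorProduct.assoc R (H ⊗[R] H) (H ⊗[R] H) (H ⊗[R] H)).symm
        (LinearMap.lTensor (H ⊗[R] H) comulHH (comulHH w)) := by
    rw [← coassocW_pt w, LinearEquiv.symm_apply_apply]
  rw [e1, e2, hY]
  generalize (LinearMap.lTensor (H ⊗[R] H) comulHH (comulHH w) :
    (H ⊗[R] H) ⊗[R] ((H ⊗[R] H) ⊗[R] (H ⊗[R] H))) = Y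
  induction Y using TensorProduct.induction_on with
  | zero => simp
  | tmul w₁ yy =>
    induction yy using TensorProduct.induction_on with
    | zero => simp
    | tmul w₂ w₃ =>
      have h1 : (TensorProduct.assoc R (H ⊗[R] H) (H ⊗[R] H)
          (H ⊗[R] H)).symm (w₁ ⊗ₜ (w₂ ⊗ₜ w₃)) = (w₁ ⊗ₜ w₂) ⊗ₜ w₃ := by simp
      rw [h1]
      simp only [TensorProduct.map_tmul, LinearMap.rTensor_tmul,
        LinearMap.lTensor_tmul]
      exact ceq12' E X (comulHH w₁) w₂ (comulHH w₃)
    | add u v hu hv => simp only [map_add, tmul_add, hu, hv]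
  | add u v hu hv => simp only [map_add, tmul_add, hu, hv]

lemma ceq23' (X : H ⊗[R] (H ⊗[R] H)) (S : (H ⊗[R] H) ⊗[R] (H ⊗[R] H))
    (Y : ((H ⊗[R] H) ⊗[R] (H ⊗[R] H)) ⊗[R] (H ⊗[R] H)) :
    CE2' E (X ⊗ₜ (S ⊗ₜ
        ((TensorProduct.assoc R (H ⊗[R] H) (H ⊗[R] H) (H ⊗[R] H)) Y))) =
      CE3' E (X ⊗ₜ (S ⊗ₜ Y)) := by
  induction X using TensorProduct.induction_on with
  | zero => simp
  | tmul x₁ xx =>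
    induction xx using TensorProduct.induction_on with
    | zero => simp
    | tmul x₂ x₃ =>
      induction S using TensorProduct.induction_on with
      | zero => simp
      | tmul a b =>
        induction Y using TensorProduct.induction_on with
        | zero => simp
        | tmul cd e =>
          induction cd using TensorProduct.induction_on with
          | zero => simp
          | tmul c d =>
            simp [CE2', CE3', CM, CN1', CN1, CP, CQ, ZM, IM, gammaM]
          | add u v hu hv => simp only [add_tmul, tmul_add, map_add, hu, hv]
        | add u v hu hv => simp only [add_tmul, tmul_add, map_add, hu, hv]
      | add u v hu hv => simp only [add_tmul, tmul_add, map_add, hu, hv]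
    | add u v hu hv => simp only [add_tmul, tmul_add, map_add, hu, hv]
  | add u v hu hv => simp only [add_tmul, tmul_add, map_add, hu, hv]

lemma r8' (X : H ⊗[R] (H ⊗[R] H)) (s : (H ⊗[R] H) ⊗[R] (H ⊗[R] H)) :
    CE2' E (X ⊗ₜ ((TensorProduct.map comulHH
        (LinearMap.lTensor (H ⊗[R] H) comulHH ∘ₗ comulHH)) s)) =
      CE3' E (X ⊗ₜ ((TensorProduct.map comulHH
        (LinearMap.rTensor (H ⊗[R] H) comulHH ∘ₗ comulHH)) s)) := by
  induction s using TensorProduct.induction_on with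
  | zero => simp
  | tmul P Q =>
    simp only [TensorProduct.map_tmul, LinearMap.comp_apply]
    rw [← coassocW_pt Q, ceq23']
  | add c d hc hd => simp only [map_add, tmul_add, hc, hd]

lemma r9' (X : H ⊗[R] (H ⊗[R] H)) (s : (H ⊗[R] H) ⊗[R] (H ⊗[R] H)) :
    CE3' E (X ⊗ₜ ((TensorProduct.map comulHH
        (LinearMap.rTensor (H ⊗[R] H) comulHH ∘ₗ comulHH)) s)) =
      CM E (X ⊗ₜ ((TensorProduct.map comulHH
        (LinearMap.rTensor (H ⊗[R] H)
          (TensorProduct.map E.mul E.tau ∘ₗ comulHH)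
            ∘ₗ comulHH)) s)) := by
  have key : ∀ q : (H ⊗[R] H) ⊗[R] (H ⊗[R] H),
      LinearMap.rTensor (H ⊗[R] H) (TensorProduct.map E.mul E.tau)
          (LinearMap.rTensor (H ⊗[R] H) comulHH q) =
      LinearMap.rTensor (H ⊗[R] H)
          (TensorProduct.map E.mul E.tau ∘ₗ comulHH) q := by
    intro q
    rw [← LinearMap.comp_apply, ← LinearMap.rTensor_comp]
  induction s using TensorProduct.induction_on with
  | zero => simp
  | tmul P Q =>
    simp only [TensorProduct.map_tmul, LinearMap.comp_apply, CE3',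
      LinearMap.lTensor_tmul]
    rw [key]
  | add c d hc hd => simp only [map_add, tmul_add, hc, hd]

end BEcocycle
namespace BEcocycle
open Coalgebra LinearMap

variable (E : ExtendingDatum R A H)

lemma Rmain (hBE7 : E.BE7) (hδ : E.ComulMultiplicative) (g h l : H) :
    TensorProduct.map (P2 E) (Q2 E)
        ((TensorProduct.tensorTensorTensorComm R (H ⊗[R] H) (H ⊗[R] H) H H)
          ((comulHH (g ⊗ₜ h)) ⊗ₜ (comul l))) =
      cocycleRHS E.psiE E.sigmaE (g ⊗ₜ (h ⊗ₜ l)) := by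
  rw [comulHH_tmul g h, r1 E (comul g) (comul h) (comul l),
    ← comulHH_tmul h l, r4 E (comul g) (comulHH (h ⊗ₜ l))]
  have hCN1 : TensorProduct.map (CP E) (CQ E)
      ((TensorProduct.tensorTensorTensorComm R (H ⊗[R] H) H
          (((H ⊗[R] H) ⊗[R] (H ⊗[R] H)) ⊗[R] (H ⊗[R] H))
          ((H ⊗[R] H) ⊗[R] (H ⊗[R] H)))
        ((LinearMap.rTensor H (comul : H →ₗ[R] H ⊗[R] H) (comul g)) ⊗ₜ
          ((TensorProduct.map
            (LinearMap.rTensor (H ⊗[R] H) comulHH ∘ₗ comulHH) comulHH)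
            (comulHH (h ⊗ₜ l))))) =
      CN1 E ((LinearMap.rTensor H (comul : H →ₗ[R] H ⊗[R] H) (comul g)) ⊗ₜ
        ((TensorProduct.map
          (LinearMap.rTensor (H ⊗[R] H) comulHH ∘ₗ comulHH) comulHH)
          (comulHH (h ⊗ₜ l)))) := rfl
  rw [hCN1, ← cn1'_glue E (LinearMap.rTensor H comul (comul g)) _,
    Coalgebra.coassoc_apply g, r7', r8', r9']
  have hbe7 : (TensorProduct.comm R A H).toLinearMap ∘ₗ E.sigmaE =
      TensorProduct.map E.mul E.tau ∘ₗ comulHH := hBE7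
  rw [← hbe7, ← r9, ← r8, ← r7, ← r6, ← r5 E hδ g (h ⊗ₜ l)]

end BEcocycle
/-- If an extending datum satisfies (BE1), (BE5), (BE7) and δ_H is
multiplicative, then the weak crossed product cocycle condition holds for
ψ and σ. -/
theorem BE_implies_cocycle (E : ExtendingDatum R A H)
    (hBE1 : E.BE1) (hBE5 : E.BE5) (hBE7 : E.BE7)
    (hδ : E.ComulMultiplicative) :
    cocycleLHS E.sigmaE =
      cocycleRHS E.psiE E.sigmaE ∘ₗ (TensorProduct.assoc R H H H).toLinearMap := by
  open BEcocycle in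
  apply TensorProduct.ext_threefold
  intro g h l
  rw [show (cocycleRHS E.psiE E.sigmaE ∘ₗ (TensorProduct.assoc R H H H).toLinearMap)
      ((g ⊗ₜ h) ⊗ₜ l) = cocycleRHS E.psiE E.sigmaE (g ⊗ₜ (h ⊗ₜ l)) by simp]
  rw [collectL E hδ (g ⊗ₜ h) l, ← coassocW_pt, ← collectPQ_L,
    ← P2_eq_P1 E hBE5, Q1_eq_Q2 E hBE1, Rmain E hBE7 hδ g h l]
end
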